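/- arXiv:2601.10486 — 5 statements merged into one kernel-verified Lean document; each statement's English description precedes it below -/
import Mathlib

section
/- (Lemma 4.1, weighted summability of the interaction coefficients) Fix d ≥ 1, an integer L ≥ 2, a symmetric V : Λ → ℝ, and θ ∈ {−1,+1}. Then for every p ≥ 0 and every i ∈ {1,…,8}: Σ_{y,y'∈Λ} (Π_{j=1}^d ⟨y_j⟩⟨y'_j⟩)^p · (sup_{k∈Λ*} |v_i(k,y)|) · |w_i(y')| ≤ (2^{pd} + 3) ‖V̂‖_p². -/
noncomputable section

namespace KWP

open MeasureTheory Classical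

/-- regularized absolute value `⟨r⟩ = √(1+r²)` -/
def reg (r : ℝ) : ℝ := Real.sqrt (1 + r^2)

/-- `e^{2πi t}` -/
def eTwoPiI (t : ℝ) : ℂ := Complex.exp (2*Real.pi*Complex.I*(t:ℂ))

/-- one-dimensional centered periodic lattice of side `L`: representatives in `(-L/2, L/2]` -/
def Lambda1 (L : ℕ) : Finset ℤ :=
  (Finset.Icc (-(L:ℤ)) (L:ℤ)).filter (fun x => -(L:ℤ) < 2*x ∧ 2*x ≤ (L:ℤ))

/-- the lattice `Λ = Λ₁^d` -/
def LambdaSet (L d : ℕ) : Finset (Fin d → ℤ) :=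
  Fintype.piFinset (fun _ => Lambda1 L)

/-- centered representative of `z` modulo `L` -/
def cmod (L : ℕ) (z : ℤ) : ℤ :=
  if 2*(z % (L:ℤ)) ≤ (L:ℤ) then z % (L:ℤ) else z % (L:ℤ) - (L:ℤ)

/-- componentwise centered representative modulo `Λ` -/
def cmodVec (L : ℕ) {d : ℕ} (z : Fin d → ℤ) : Fin d → ℤ := fun i => cmod L (z i)

/-- dual lattice point `m/L ∈ Λ*` associated to `m ∈ Λ` -/
def dpt (L : ℕ) {d : ℕ} (m : Fin d → ℤ) : Fin d → ℝ := fun i => (m i : ℝ) / (L:ℝ)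

/-- membership in the dual lattice `Λ*` -/
def memDual (L d : ℕ) (k : Fin d → ℝ) : Prop := ∃ m ∈ LambdaSet L d, k = dpt L m

/-- normalized sum over the dual lattice, `∫_{Λ*} dk f(k)` (ℂ-valued) -/
def dInt (L d : ℕ) (f : (Fin d → ℝ) → ℂ) : ℂ :=
  ((L:ℂ)^d)⁻¹ * ∑ m ∈ LambdaSet L d, f (dpt L m)

/-- normalized sum over the dual lattice, `∫_{Λ*} dk f(k)` (ℝ-valued) -/
def dIntR (L d : ℕ) (f : (Fin d → ℝ) → ℝ) : ℝ :=
  ((L:ℝ)^d)⁻¹ * ∑ m ∈ LambdaSet L d, f (dpt L m)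

/-- `k · y` for `k ∈ ℝ^d`, `y ∈ ℤ^d` -/
def dotIZ {d : ℕ} (k : Fin d → ℝ) (y : Fin d → ℤ) : ℝ := ∑ i, k i * (y i : ℝ)

/-- discrete Fourier transform `f̂(k) = Σ_{y∈Λ} e^{-2πik·y} f(y)` -/
def dft (L d : ℕ) (f : (Fin d → ℤ) → ℂ) (k : Fin d → ℝ) : ℂ :=
  ∑ y ∈ LambdaSet L d, eTwoPiI (-(dotIZ k y)) * f y

/-- inverse discrete Fourier transform `ǧ(x) = ∫_{Λ*}dk g(k) e^{2πik·x}` -/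
def idft (L d : ℕ) (g : (Fin d → ℝ) → ℂ) (x : Fin d → ℤ) : ℂ :=
  dInt L d (fun k => g k * eTwoPiI (dotIZ k x))

/-- Sobolev-type norm `‖g‖_p = Σ_{y∈Λ} (Π_j ⟨y_j⟩^p) |ǧ(y)|` -/
def sobolevNorm (L d : ℕ) (p : ℝ) (g : (Fin d → ℝ) → ℂ) : ℝ :=
  ∑ y ∈ LambdaSet L d, (∏ j, reg (y j : ℝ) ^ p) * ‖idft L d g y‖

/-- Sobolev-type sup norm `|||g|||_p = sup_{y∈Λ} (Π_j ⟨y_j⟩^p) |ǧ(y)|` -/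
def sobolevSupNorm (L d : ℕ) (p : ℝ) (g : (Fin d → ℝ) → ℂ) : ℝ :=
  sSup { v : ℝ | ∃ y ∈ LambdaSet L d, v = (∏ j, reg (y j : ℝ) ^ p) * ‖idft L d g y‖ }

/-- sup norm over the dual lattice `Λ*` -/
def dualSupNorm (L d : ℕ) (f : (Fin d → ℝ) → ℝ) : ℝ :=
  sSup { v : ℝ | ∃ m ∈ LambdaSet L d, v = |f (dpt L m)| }

/-- Fourier transform of the interaction potential (ℂ-valued) -/
def VhatC (L d : ℕ) (V : (Fin d → ℤ) → ℝ) (k : Fin d → ℝ) : ℂ :=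
  dft L d (fun y => (V y : ℂ)) k

/-- Fourier transform of the symmetric interaction potential (real part) -/
def VhatRe (L d : ℕ) (V : (Fin d → ℤ) → ℝ) (k : Fin d → ℝ) : ℝ := (VhatC L d V k).re

/-- periodic convolution `(V∗V)(y) = Σ_{x∈Λ} V(x)V(y-x)` -/
def convVV (L d : ℕ) (V : (Fin d → ℤ) → ℝ) (y : Fin d → ℤ) : ℝ :=
  ∑ x ∈ LambdaSet L d, V x * V (cmodVec L (fun i => y i - x i))

/-- `𝒱(k,y) = 𝟙(y=0) V̂(k)² + 2θ V̂(k) V(y) + (V∗V)(y)` -/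
def calV (L d : ℕ) (θ : ℝ) (V : (Fin d → ℤ) → ℝ) (k : Fin d → ℝ) (y : Fin d → ℤ) : ℝ :=
  (if y = 0 then (1:ℝ) else 0) * (VhatRe L d V k)^2 + 2*θ*(VhatRe L d V k)*(V y) + convVV L d V y

/-- the interaction coefficients `v_i(k,y)` -/
def vcoef (L d : ℕ) (θ : ℝ) (V : (Fin d → ℤ) → ℝ) (i : ℕ) (k : Fin d → ℝ) (y : Fin d → ℤ) : ℝ :=
  if i ≤ 5 then calV L d θ V k y else if i ≤ 7 then convVV L d V y else 2 * V y

/-- the interaction coefficients `w_i(y')` -/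
def wcoef {d : ℕ} (V : (Fin d → ℤ) → ℝ) (i : ℕ) (y' : Fin d → ℤ) : ℝ :=
  if i ≤ 7 then (if y' = 0 then (1:ℝ) else 0) else V y'

lemma reg_nonneg (r : ℝ) : 0 ≤ reg r := Real.sqrt_nonneg _

lemma one_le_reg (r : ℝ) : 1 ≤ reg r := by
  have h : (1:ℝ) ≤ 1 + r^2 := by nlinarith [sq_nonneg r]
  calc (1:ℝ) = Real.sqrt 1 := by simp
    _ ≤ Real.sqrt (1 + r^2) := Real.sqrt_le_sqrt h

lemma reg_pos (r : ℝ) : 0 < reg r := lt_of_lt_of_le one_pos (one_le_reg r)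

lemma reg_zero : reg 0 = 1 := by simp [reg]

lemma reg_mono {a b : ℝ} (h : |a| ≤ |b|) : reg a ≤ reg b := by
  apply Real.sqrt_le_sqrt
  have := sq_abs a; have := sq_abs b
  nlinarith [sq_nonneg (|b| - |a|), abs_nonneg a]

lemma reg_triangle {x c y : ℝ} (h : |y| ≤ |x| + |c|) : reg y ≤ 2 * reg x * reg c := by
  have h1 : reg y ≤ Real.sqrt (4 * (1+x^2) * (1+c^2)) := by
    apply Real.sqrt_le_sqrt
    have h2 : y^2 ≤ (|x| + |c|)^2 := by
      rw [← sq_abs y]; exact pow_le_pow_left₀ (abs_nonneg y) h 2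
    have := sq_abs x; have := sq_abs c
    nlinarith [abs_nonneg x, abs_nonneg c, sq_nonneg (x*c), sq_nonneg (|x| - |c|)]
  calc reg y ≤ Real.sqrt (4 * (1+x^2) * (1+c^2)) := h1
    _ = 2 * reg x * reg c := by
        rw [Real.sqrt_mul (by positivity), Real.sqrt_mul (by norm_num : (0:ℝ) ≤ 4)]
        rw [show (4:ℝ) = 2^2 by norm_num, Real.sqrt_sq (by norm_num)]
        rw [reg, reg, mul_assoc]

lemma mem_Lambda1 {L : ℕ} {z : ℤ} : z ∈ Lambda1 L ↔ -(L:ℤ) < 2*z ∧ 2*z ≤ (L:ℤ) := by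
  simp only [Lambda1, Finset.mem_filter, Finset.mem_Icc]
  omega

lemma zero_mem_Lambda1 {L : ℕ} (hL : 1 ≤ L) : (0:ℤ) ∈ Lambda1 L := by
  rw [mem_Lambda1]; omega

lemma emod_spec {L : ℕ} (hL : 1 ≤ L) {z : ℤ} (hz : -(L:ℤ) ≤ z) (hz2 : z < L) :
    z % (L:ℤ) = if 0 ≤ z then z else z + L := by
  split_ifs with h
  · exact Int.emod_eq_of_lt h hz2
  · have e : (z + (L:ℤ) * 1) % (L:ℤ) = z % L := Int.add_mul_emod_self_left ..
    rw [mul_one] at e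
    rw [← e, Int.emod_eq_of_lt (by omega) (by omega)]

lemma emod_bounds {L : ℕ} (hL : 1 ≤ L) (z : ℤ) : 0 ≤ z % (L:ℤ) ∧ z % (L:ℤ) < L := by
  have hL' : (0:ℤ) < L := by exact_mod_cast hL
  exact ⟨Int.emod_nonneg z hL'.ne', Int.emod_lt_of_pos z hL'⟩

lemma cmod_mem {L : ℕ} (hL : 1 ≤ L) (z : ℤ) : cmod L z ∈ Lambda1 L := by
  obtain ⟨h1, h2⟩ := emod_bounds hL z
  rw [mem_Lambda1]; unfold cmod; split <;> omega

lemma cmod_eq_self {L : ℕ} (hL : 1 ≤ L) {z : ℤ} (hz : z ∈ Lambda1 L) : cmod L z = z := by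
  rw [mem_Lambda1] at hz
  have h := emod_spec hL (z := z) (by omega) (by omega)
  unfold cmod; rw [h]; split_ifs <;> omega

lemma cmod_congr {L : ℕ} {z z' : ℤ} (h : z % (L:ℤ) = z' % (L:ℤ)) : cmod L z = cmod L z' := by
  unfold cmod; rw [h]

lemma cmod_emod {L : ℕ} (z : ℤ) : cmod L z % (L:ℤ) = z % (L:ℤ) := by
  unfold cmod; split_ifs with h
  · exact Int.emod_emod_of_dvd z dvd_rfl
  · have e : (z % (L:ℤ) + (L:ℤ) * (-1)) % (L:ℤ) = z % (L:ℤ) % (L:ℤ) := Int.add_mul_emod_self_left ..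
    rw [mul_neg_one, ← sub_eq_add_neg] at e
    rw [e]; exact Int.emod_emod_of_dvd z dvd_rfl

lemma key_abs {L : ℕ} (hL : 1 ≤ L) {x y : ℤ} (hx : x ∈ Lambda1 L) (hy : y ∈ Lambda1 L) :
    y.natAbs ≤ x.natAbs + (cmod L (y - x)).natAbs := by
  rw [mem_Lambda1] at hx hy
  have h := emod_spec hL (z := y - x) (by omega) (by omega)
  unfold cmod; rw [h]; split_ifs <;> omega

lemma eTwoPiI_add (s t : ℝ) : eTwoPiI (s + t) = eTwoPiI s * eTwoPiI t := by
  rw [eTwoPiI, eTwoPiI, eTwoPiI, ← Complex.exp_add]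
  push_cast; ring_nf

lemma eTwoPiI_int (n : ℤ) : eTwoPiI (n : ℝ) = 1 := by
  rw [eTwoPiI, show 2*(Real.pi:ℂ)*Complex.I*((n:ℝ):ℂ) = (n:ℂ) * (2*Real.pi*Complex.I) by push_cast; ring]
  exact Complex.exp_int_mul_two_pi_mul_I n

lemma eTwoPiI_int_add (t : ℝ) (n : ℤ) : eTwoPiI (t + n) = eTwoPiI t := by
  rw [eTwoPiI_add, eTwoPiI_int, mul_one]

lemma abs_eTwoPiI (t : ℝ) : ‖eTwoPiI t‖ = 1 := by
  rw [eTwoPiI, show 2*(Real.pi:ℂ)*Complex.I*((t:ℝ):ℂ) = ((2*Real.pi*t : ℝ):ℂ)*Complex.I by push_cast; ring]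
  exact Complex.norm_exp_ofReal_mul_I _

lemma eTwoPiI_nat_mul (n : ℕ) (t : ℝ) : eTwoPiI ((n:ℝ) * t) = eTwoPiI t ^ n := by
  induction n with
  | zero => simp [eTwoPiI]
  | succ k ih => push_cast; rw [add_mul, one_mul, eTwoPiI_add, ih, pow_succ]

lemma eTwoPiI_eq_one_iff {t : ℝ} : eTwoPiI t = 1 ↔ ∃ n : ℤ, t = n := by
  rw [eTwoPiI, Complex.exp_eq_one_iff]
  constructor
  · rintro ⟨n, hn⟩
    refine ⟨n, ?_⟩
    have h2 : (2*(Real.pi:ℂ)*Complex.I) ≠ 0 := by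
      simp [Complex.I_ne_zero, Real.pi_ne_zero, Complex.ofReal_ne_zero]
    have : ((t:ℂ)) = (n:ℂ) := by
      apply mul_left_cancel₀ h2
      rw [hn]; ring
    exact_mod_cast this
  · rintro ⟨n, hn⟩
    exact ⟨n, by rw [hn]; push_cast; ring⟩

lemma eTwoPiI_period {L : ℕ} (hL : 1 ≤ L) (m a : ℤ) :
    eTwoPiI ((m:ℝ) * a / L) = eTwoPiI (((m % (L:ℤ) :ℤ):ℝ) * a / L) := by
  have hL' : ((L:ℝ)) ≠ 0 := by positivity
  have hm : m = m % (L:ℤ) + (L:ℤ) * (m / (L:ℤ)) := (Int.emod_add_mul_ediv m (L:ℤ)).symm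
  have : (m:ℝ) * a / L = ((m % (L:ℤ) :ℤ):ℝ) * a / L + ((m / (L:ℤ) * a : ℤ) : ℝ) := by
    rw [show (m:ℝ) = ((m % (L:ℤ) :ℤ):ℝ) + (L:ℝ) * ((m / (L:ℤ) :ℤ):ℝ) by exact_mod_cast congrArg (Int.cast : ℤ → ℝ) hm]
    push_cast
    field_simp
  rw [this, eTwoPiI_int_add]

lemma charSum {L : ℕ} (hL : 1 ≤ L) (a : ℤ) :
    ∑ m ∈ Lambda1 L, eTwoPiI ((m : ℝ) * a / L) = if (L:ℤ) ∣ a then (L:ℂ) else 0 := by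
  have hL' : ((L:ℝ)) ≠ 0 := by positivity
  have step1 : ∑ m ∈ Lambda1 L, eTwoPiI ((m : ℝ) * a / L)
      = ∑ n ∈ Finset.range L, eTwoPiI ((n : ℝ) * a / L) := by
    apply Finset.sum_nbij' (i := fun m => (m % (L:ℤ)).toNat) (j := fun n => cmod L (n:ℤ))
    · intro m hm
      obtain ⟨h1, h2⟩ := emod_bounds hL m
      simp only [Finset.mem_range]; omega
    · intro n hn
      exact cmod_mem hL _
    · intro m hm
      obtain ⟨h1, h2⟩ := emod_bounds hL m
      have : ((m % (L:ℤ)).toNat : ℤ) = m % (L:ℤ) := by omega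
      rw [this]
      calc cmod L (m % (L:ℤ)) = cmod L m := cmod_congr (Int.emod_emod_of_dvd m dvd_rfl)
        _ = m := cmod_eq_self hL hm
    · intro n hn
      simp only [Finset.mem_range] at hn
      have h1 : cmod L (n:ℤ) % (L:ℤ) = (n:ℤ) % (L:ℤ) := cmod_emod _
      have h2 : ((n:ℤ)) % (L:ℤ) = n := Int.emod_eq_of_lt (by positivity) (by exact_mod_cast hn)
      omega
    · intro m hm
      obtain ⟨h1, h2⟩ := emod_bounds hL m
      rw [eTwoPiI_period hL m a]
      congr 2
      have : (((m % (L:ℤ)).toNat : ℕ) : ℝ) = ((m % (L:ℤ) : ℤ) : ℝ) := by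
        exact_mod_cast congrArg (Int.cast : ℤ → ℝ) (by omega : ((m % (L:ℤ)).toNat : ℤ) = m % (L:ℤ))
      rw [this]
  rw [step1]
  have hfac : ∀ n : ℕ, eTwoPiI ((n : ℝ) * a / L) = eTwoPiI ((a:ℝ)/L) ^ n := by
    intro n
    rw [← eTwoPiI_nat_mul]
    congr 1; field_simp
  simp_rw [hfac]
  by_cases hdvd : (L:ℤ) ∣ a
  · have hthis : eTwoPiI ((a:ℝ)/L) = 1 := by
      obtain ⟨c, hc⟩ := hdvd
      rw [eTwoPiI_eq_one_iff]
      exact ⟨c, by rw [hc]; push_cast; field_simp⟩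
    simp [hthis, hdvd]
  · have hne : eTwoPiI ((a:ℝ)/L) ≠ 1 := by
      intro h1
      obtain ⟨n, hn⟩ := eTwoPiI_eq_one_iff.mp h1
      apply hdvd
      refine ⟨n, ?_⟩
      have : (a:ℝ) = (L:ℝ) * n := by field_simp at hn; linarith [hn]
      exact_mod_cast this
    rw [geom_sum_eq hne]
    have hpow : eTwoPiI ((a:ℝ)/L) ^ L = 1 := by
      rw [← eTwoPiI_nat_mul]
      rw [show (L:ℝ) * ((a:ℝ)/L) = ((a:ℤ):ℝ) by field_simp]
      exact eTwoPiI_int a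
    rw [hpow]
    simp [hdvd]

lemma eTwoPiI_sum {ι : Type*} (s : Finset ι) (g : ι → ℝ) :
    eTwoPiI (∑ i ∈ s, g i) = ∏ i ∈ s, eTwoPiI (g i) := by
  classical
  induction s using Finset.induction with
  | empty => simp [eTwoPiI]
  | insert a s h ih => rw [Finset.sum_insert h, Finset.prod_insert h, eTwoPiI_add, ih]

lemma mem_LambdaSet {L d : ℕ} {y : Fin d → ℤ} :
    y ∈ LambdaSet L d ↔ ∀ i, y i ∈ Lambda1 L := by
  simp [LambdaSet, Fintype.mem_piFinset]

lemma dvd_eq_of_mem {L : ℕ} (hL : 1 ≤ L) {a b : ℤ} (ha : a ∈ Lambda1 L) (hb : b ∈ Lambda1 L)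
    (h : (L:ℤ) ∣ a - b) : a = b := by
  rw [mem_Lambda1] at ha hb
  have := Int.eq_zero_of_abs_lt_dvd h (by rw [abs_lt]; omega)
  omega

lemma idft_dft {L d : ℕ} (hL : 1 ≤ L) (f : (Fin d → ℤ) → ℂ) {x : Fin d → ℤ}
    (hx : x ∈ LambdaSet L d) : idft L d (dft L d f) x = f x := by
  have hLne : ((L:ℂ))^d ≠ 0 := by
    apply pow_ne_zero; exact_mod_cast Nat.cast_ne_zero.mpr (by omega)
  rw [idft, dInt]
  have step1 : ∀ m : Fin d → ℤ,
      dft L d f (dpt L m) * eTwoPiI (dotIZ (dpt L m) x)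
      = ∑ y ∈ LambdaSet L d, f y * ∏ j, eTwoPiI ((m j : ℝ) * (x j - y j) / L) := by
    intro m
    rw [dft, Finset.sum_mul]
    apply Finset.sum_congr rfl
    intro y hy
    rw [mul_comm (eTwoPiI _) (f y), mul_assoc, ← eTwoPiI_add]
    congr 1
    rw [show -dotIZ (dpt L m) y + dotIZ (dpt L m) x
        = ∑ j, ((m j : ℝ) * (x j - y j) / L) by
      rw [dotIZ, dotIZ]
      rw [Finset.sum_congr rfl (fun (i : Fin d) _ =>
        (show (m i : ℝ) * (x i - y i) / L = dpt L m i * (x i : ℝ) - dpt L m i * (y i : ℝ) by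
          rw [dpt]; ring))]
      rw [Finset.sum_sub_distrib]
      ring]
    exact eTwoPiI_sum _ _
  simp_rw [step1]
  rw [Finset.sum_comm]
  have step2 : ∀ y ∈ LambdaSet L d,
      ∑ m ∈ LambdaSet L d, f y * ∏ j, eTwoPiI ((m j : ℝ) * (x j - y j) / L)
      = f y * (if y = x then ((L:ℂ))^d else 0) := by
    intro y hy
    rw [← Finset.mul_sum]
    congr 1
    rw [LambdaSet, Finset.sum_prod_piFinset (Lambda1 L)
      (fun (j : Fin d) (mj : ℤ) => eTwoPiI ((mj : ℝ) * ((x j : ℝ) - (y j : ℝ)) / L))]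
    have hfac : ∀ j : Fin d, ∑ mj ∈ Lambda1 L, eTwoPiI ((mj : ℝ) * (x j - y j) / L)
        = if (L:ℤ) ∣ (x j - y j) then (L:ℂ) else 0 := by
      intro j
      have := charSum hL (x j - y j)
      simpa using this
    rw [Finset.prod_congr rfl (fun j _ => hfac j)]
    by_cases hxy : y = x
    · subst hxy
      simp
    · rw [if_neg hxy]
      have : ∃ j, ¬ (L:ℤ) ∣ (x j - y j) := by
        by_contra hcon
        push_neg at hcon
        apply hxy
        funext j
        exact (dvd_eq_of_mem hL (mem_LambdaSet.mp hx j) (mem_LambdaSet.mp hy j) (hcon j)).symm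
      obtain ⟨j, hj⟩ := this
      exact Finset.prod_eq_zero (Finset.mem_univ j) (by rw [if_neg hj])
  rw [Finset.sum_congr rfl step2]
  simp only [mul_ite, mul_zero]
  rw [Finset.sum_ite_eq' (LambdaSet L d) x (fun y => f y * (L:ℂ)^d), if_pos hx]
  field_simp

def Wt (p : ℝ) {d : ℕ} (y : Fin d → ℤ) : ℝ := ∏ j, reg (y j : ℝ) ^ p

lemma Wt_nonneg (p : ℝ) {d : ℕ} (y : Fin d → ℤ) : 0 ≤ Wt p y :=
  Finset.prod_nonneg fun j _ => Real.rpow_nonneg (reg_nonneg _) p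

lemma one_le_Wt {p : ℝ} (hp : 0 ≤ p) {d : ℕ} (y : Fin d → ℤ) : 1 ≤ Wt p y := by
  rw [Wt]
  calc (1:ℝ) = ∏ _j : Fin d, 1 := by simp
    _ ≤ _ := Finset.prod_le_prod (by intros; norm_num)
        (fun j _ => Real.one_le_rpow (one_le_reg _) hp)

lemma Wt_zero (p : ℝ) {d : ℕ} : Wt p (0 : Fin d → ℤ) = 1 := by
  simp [Wt, reg_zero, Real.one_rpow]

lemma Wt_eq_rpow_prod {p : ℝ} {d : ℕ} (y : Fin d → ℤ) :
    (∏ j, reg (y j : ℝ)) ^ p = Wt p y :=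
  (Real.finset_prod_rpow Finset.univ _ (fun j _ => reg_nonneg _) p).symm

lemma zero_mem_LambdaSet {L d : ℕ} (hL : 1 ≤ L) : (0 : Fin d → ℤ) ∈ LambdaSet L d :=
  mem_LambdaSet.mpr fun i => zero_mem_Lambda1 hL

lemma sobolev_eq {L d : ℕ} (hL : 1 ≤ L) (p : ℝ) (V : (Fin d → ℤ) → ℝ) :
    sobolevNorm L d p (VhatC L d V) = ∑ y ∈ LambdaSet L d, Wt p y * |V y| := by
  unfold sobolevNorm
  apply Finset.sum_congr rfl
  intro y hy
  rw [show (VhatC L d V) = dft L d (fun y => ((V y : ℂ))) from rfl,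
    idft_dft hL _ hy, Complex.norm_real, Real.norm_eq_abs]
  rfl

lemma sobolev_nonneg {L d : ℕ} (p : ℝ) (V : (Fin d → ℤ) → ℝ) (hL : 1 ≤ L) :
    0 ≤ ∑ y ∈ LambdaSet L d, Wt p y * |V y| :=
  Finset.sum_nonneg fun y _ => mul_nonneg (Wt_nonneg _ _) (abs_nonneg _)

lemma N_le_S {L d : ℕ} {p : ℝ} (hp : 0 ≤ p) (V : (Fin d → ℤ) → ℝ) :
    ∑ y ∈ LambdaSet L d, |V y| ≤ ∑ y ∈ LambdaSet L d, Wt p y * |V y| := by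
  apply Finset.sum_le_sum
  intro y hy
  nth_rewrite 1 [← one_mul (|V y|)]
  exact mul_le_mul_of_nonneg_right (one_le_Wt hp y) (abs_nonneg _)

lemma VhatRe_bound {L d : ℕ} (V : (Fin d → ℤ) → ℝ) (k : Fin d → ℝ) :
    |VhatRe L d V k| ≤ ∑ y ∈ LambdaSet L d, |V y| := by
  calc |VhatRe L d V k| ≤ ‖VhatC L d V k‖ := Complex.abs_re_le_norm _
    _ ≤ ∑ y ∈ LambdaSet L d, ‖eTwoPiI (-(dotIZ k y)) * (V y : ℂ)‖ := by
        apply norm_sum_le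
    _ = ∑ y ∈ LambdaSet L d, |V y| := by
        apply Finset.sum_congr rfl
        intro y hy
        rw [norm_mul, abs_eTwoPiI, one_mul, Complex.norm_real, Real.norm_eq_abs]

lemma sum_shift {L d : ℕ} (hL : 1 ≤ L) {x : Fin d → ℤ} (hx : x ∈ LambdaSet L d)
    (g : (Fin d → ℤ) → ℝ) :
    ∑ y ∈ LambdaSet L d, g (cmodVec L (fun i => y i - x i)) = ∑ c ∈ LambdaSet L d, g c := by
  apply Finset.sum_nbij' (i := fun y => cmodVec L (fun i => y i - x i))
    (j := fun c => cmodVec L (fun i => x i + c i))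
  · intro y hy
    exact mem_LambdaSet.mpr fun i => cmod_mem hL _
  · intro c hc
    exact mem_LambdaSet.mpr fun i => cmod_mem hL _
  · intro y hy
    funext i
    have h1 : (x i + cmod L (y i - x i)) % (L:ℤ) = (x i + (y i - x i)) % (L:ℤ) :=
      Int.ModEq.add_left (x i) (cmod_emod _)
    calc cmodVec L (fun i' => x i' + cmodVec L (fun i'' => y i'' - x i'') i') i
        = cmod L (x i + cmod L (y i - x i)) := rfl
      _ = cmod L (x i + (y i - x i)) := cmod_congr h1
      _ = cmod L (y i) := by ring_nf
      _ = y i := cmod_eq_self hL (mem_LambdaSet.mp hy i)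
  · intro c hc
    funext i
    have h1 : (cmod L (x i + c i) - x i) % (L:ℤ) = (x i + c i - x i) % (L:ℤ) :=
      Int.ModEq.sub_right (x i) (cmod_emod _)
    calc cmodVec L (fun i' => cmodVec L (fun i'' => x i'' + c i'') i' - x i') i
        = cmod L (cmod L (x i + c i) - x i) := rfl
      _ = cmod L (x i + c i - x i) := cmod_congr h1
      _ = cmod L (c i) := by ring_nf
      _ = c i := cmod_eq_self hL (mem_LambdaSet.mp hc i)
  · intro y hy
    rfl

lemma Wt_young {L d : ℕ} (hL : 1 ≤ L) {p : ℝ} (hp : 0 ≤ p) {x y : Fin d → ℤ}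
    (hx : x ∈ LambdaSet L d) (hy : y ∈ LambdaSet L d) :
    Wt p y ≤ (2:ℝ)^(p*(d:ℝ)) * Wt p x * Wt p (cmodVec L (fun i => y i - x i)) := by
  have hcomp : ∀ j, reg ((y j : ℤ) : ℝ) ^ p
      ≤ (2:ℝ)^p * reg ((x j : ℤ) : ℝ) ^ p * reg ((cmod L (y j - x j) : ℤ) : ℝ) ^ p := by
    intro j
    have hkey := key_abs hL (mem_LambdaSet.mp hx j) (mem_LambdaSet.mp hy j)
    have habs : |((y j : ℤ) : ℝ)| ≤ |((x j : ℤ) : ℝ)| + |((cmod L (y j - x j) : ℤ) : ℝ)| := by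
      have hkey' : |y j| ≤ |x j| + |cmod L (y j - x j)| := by
        rw [Int.abs_eq_natAbs, Int.abs_eq_natAbs, Int.abs_eq_natAbs]
        exact_mod_cast hkey
      exact_mod_cast hkey'
    have h1 : reg ((y j : ℤ) : ℝ) ≤ 2 * reg ((x j : ℤ) : ℝ) * reg ((cmod L (y j - x j) : ℤ) : ℝ) :=
      reg_triangle habs
    calc reg ((y j : ℤ) : ℝ) ^ p
        ≤ (2 * reg ((x j : ℤ) : ℝ) * reg ((cmod L (y j - x j) : ℤ) : ℝ)) ^ p :=
          Real.rpow_le_rpow (reg_nonneg _) h1 hp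
      _ = (2:ℝ)^p * reg ((x j : ℤ) : ℝ) ^ p * reg ((cmod L (y j - x j) : ℤ) : ℝ) ^ p := by
          rw [Real.mul_rpow (mul_nonneg (by norm_num) (reg_nonneg _)) (reg_nonneg _),
            Real.mul_rpow (by norm_num) (reg_nonneg _)]
  calc Wt p y ≤ ∏ j, ((2:ℝ)^p * reg ((x j : ℤ) : ℝ) ^ p * reg ((cmod L (y j - x j) : ℤ) : ℝ) ^ p) := by
        apply Finset.prod_le_prod (fun j _ => Real.rpow_nonneg (reg_nonneg _) p)
          (fun j _ => hcomp j)
    _ = (2:ℝ)^(p*(d:ℝ)) * Wt p x * Wt p (cmodVec L (fun i => y i - x i)) := by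
        rw [Finset.prod_mul_distrib, Finset.prod_mul_distrib, Finset.prod_const,
          Finset.card_univ, Fintype.card_fin]
        have : ((2:ℝ)^p)^d = (2:ℝ)^(p*(d:ℝ)) := by
          rw [← Real.rpow_natCast ((2:ℝ)^p) d, ← Real.rpow_mul (by norm_num)]
        rw [this]
        rfl

lemma conv_bound {L d : ℕ} (hL : 1 ≤ L) {p : ℝ} (hp : 0 ≤ p) (V : (Fin d → ℤ) → ℝ) :
    ∑ y ∈ LambdaSet L d, Wt p y * |convVV L d V y|
      ≤ (2:ℝ)^(p*(d:ℝ)) * (∑ y ∈ LambdaSet L d, Wt p y * |V y|)^2 := by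
  set S := ∑ y ∈ LambdaSet L d, Wt p y * |V y| with hS
  have step1 : ∀ y ∈ LambdaSet L d, Wt p y * |convVV L d V y|
      ≤ ∑ x ∈ LambdaSet L d, (2:ℝ)^(p*(d:ℝ)) * (Wt p x * |V x|) *
          (Wt p (cmodVec L (fun i => y i - x i)) * |V (cmodVec L (fun i => y i - x i))|) := by
    intro y hy
    calc Wt p y * |convVV L d V y|
        ≤ Wt p y * ∑ x ∈ LambdaSet L d, |V x| * |V (cmodVec L (fun i => y i - x i))| := by
          apply mul_le_mul_of_nonneg_left _ (Wt_nonneg _ _)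
          rw [convVV]
          calc |∑ x ∈ LambdaSet L d, V x * V (cmodVec L (fun i => y i - x i))|
              ≤ ∑ x ∈ LambdaSet L d, |V x * V (cmodVec L (fun i => y i - x i))| :=
                Finset.abs_sum_le_sum_abs _ _
            _ = ∑ x ∈ LambdaSet L d, |V x| * |V (cmodVec L (fun i => y i - x i))| := by
                simp [abs_mul]
      _ = ∑ x ∈ LambdaSet L d, Wt p y * (|V x| * |V (cmodVec L (fun i => y i - x i))|) := by
          rw [Finset.mul_sum]
      _ ≤ _ := by
          apply Finset.sum_le_sum
          intro x hx
          have h1 := Wt_young hL hp hx hy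
          have h2 : (0:ℝ) ≤ |V x| * |V (cmodVec L (fun i => y i - x i))| := by positivity
          calc Wt p y * (|V x| * |V (cmodVec L (fun i => y i - x i))|)
              ≤ ((2:ℝ)^(p*(d:ℝ)) * Wt p x * Wt p (cmodVec L (fun i => y i - x i))) *
                (|V x| * |V (cmodVec L (fun i => y i - x i))|) :=
                mul_le_mul_of_nonneg_right h1 h2
            _ = (2:ℝ)^(p*(d:ℝ)) * (Wt p x * |V x|) *
                (Wt p (cmodVec L (fun i => y i - x i)) * |V (cmodVec L (fun i => y i - x i))|) := by
                ring
  calc ∑ y ∈ LambdaSet L d, Wt p y * |convVV L d V y|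
      ≤ ∑ y ∈ LambdaSet L d, ∑ x ∈ LambdaSet L d, (2:ℝ)^(p*(d:ℝ)) * (Wt p x * |V x|) *
          (Wt p (cmodVec L (fun i => y i - x i)) * |V (cmodVec L (fun i => y i - x i))|) :=
        Finset.sum_le_sum step1
    _ = ∑ x ∈ LambdaSet L d, ∑ y ∈ LambdaSet L d, (2:ℝ)^(p*(d:ℝ)) * (Wt p x * |V x|) *
          (Wt p (cmodVec L (fun i => y i - x i)) * |V (cmodVec L (fun i => y i - x i))|) :=
        Finset.sum_comm
    _ = ∑ x ∈ LambdaSet L d, (2:ℝ)^(p*(d:ℝ)) * (Wt p x * |V x|) * S := by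
        apply Finset.sum_congr rfl
        intro x hx
        rw [← Finset.mul_sum, sum_shift hL hx (fun c => Wt p c * |V c|)]
    _ = (2:ℝ)^(p*(d:ℝ)) * S^2 := by
        rw [← Finset.sum_mul, ← Finset.mul_sum]
        ring

lemma calV_abs_le {L d : ℕ} {θ : ℝ} (hθ : |θ| = 1) (V : (Fin d → ℤ) → ℝ)
    (k : Fin d → ℝ) (y : Fin d → ℤ) :
    |calV L d θ V k y| ≤ (if y = 0 then (∑ z ∈ LambdaSet L d, |V z|)^2 else 0)
      + 2*(∑ z ∈ LambdaSet L d, |V z|)*|V y| + |convVV L d V y| := by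
  set N := ∑ z ∈ LambdaSet L d, |V z| with hN
  have hNnn : 0 ≤ N := Finset.sum_nonneg fun z _ => abs_nonneg _
  have hR := VhatRe_bound (L := L) V k
  rw [calV]
  have h1 : |(if y = 0 then (1:ℝ) else 0) * (VhatRe L d V k)^2|
      ≤ (if y = 0 then N^2 else 0) := by
    split_ifs with h
    · rw [one_mul, abs_of_nonneg (sq_nonneg _), ← sq_abs]
      exact pow_le_pow_left₀ (abs_nonneg _) hR 2
    · simp
  have h2 : |2*θ*(VhatRe L d V k)*(V y)| ≤ 2*N*|V y| := by
    rw [abs_mul, abs_mul, abs_mul, hθ]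
    have : |(2:ℝ)| = 2 := by norm_num
    rw [this, mul_one]
    exact mul_le_mul_of_nonneg_right
      (mul_le_mul_of_nonneg_left hR (by norm_num)) (abs_nonneg _)
  calc |(if y = 0 then (1:ℝ) else 0) * (VhatRe L d V k)^2 + 2*θ*(VhatRe L d V k)*(V y)
        + convVV L d V y|
      ≤ |(if y = 0 then (1:ℝ) else 0) * (VhatRe L d V k)^2 + 2*θ*(VhatRe L d V k)*(V y)|
        + |convVV L d V y| := abs_add_le _ _
    _ ≤ |(if y = 0 then (1:ℝ) else 0) * (VhatRe L d V k)^2| + |2*θ*(VhatRe L d V k)*(V y)|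
        + |convVV L d V y| := by gcongr; exact abs_add_le _ _
    _ ≤ _ := by gcongr

lemma inner_indicator {L d : ℕ} (hL : 1 ≤ L) (p C : ℝ) (y : Fin d → ℤ) :
    ∑ y' ∈ LambdaSet L d,
      (∏ j, reg ((y j : ℤ) : ℝ) * reg ((y' j : ℤ) : ℝ))^p * C *
        |if y' = (0 : Fin d → ℤ) then (1:ℝ) else 0|
    = Wt p y * C := by
  rw [Finset.sum_eq_single_of_mem (0 : Fin d → ℤ) (zero_mem_LambdaSet hL)]
  · simp only [Pi.zero_apply, Int.cast_zero, reg_zero, mul_one, if_pos rfl, abs_one,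
      if_true, eq_self_iff_true]
    rw [Wt_eq_rpow_prod]
  · intro y' _ hne
    rw [if_neg hne, abs_zero, mul_zero]

lemma sum_Wt_indicator {L d : ℕ} (hL : 1 ≤ L) (p A : ℝ) :
    ∑ y ∈ LambdaSet L d, Wt p y * (if y = (0 : Fin d → ℤ) then A else 0) = A := by
  rw [Finset.sum_eq_single_of_mem (0 : Fin d → ℤ) (zero_mem_LambdaSet hL)]
  · rw [if_pos rfl, Wt_zero, one_mul]
  · intro y' _ hne
    rw [if_neg hne, mul_zero]

theorem interaction_coefficient_bound
    (d L : ℕ) (hd : 1 ≤ d) (hL : 2 ≤ L) (θ : ℝ) (hθ : θ = 1 ∨ θ = -1)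
    (V : (Fin d → ℤ) → ℝ)
    (hV : ∀ y ∈ LambdaSet L d, V (cmodVec L (fun i => -(y i))) = V y)
    (p : ℝ) (hp : 0 ≤ p) (i : ℕ) (hi : 1 ≤ i ∧ i ≤ 8) :
    ∑ y ∈ LambdaSet L d, ∑ y' ∈ LambdaSet L d,
      (∏ j, reg (y j : ℝ) * reg (y' j : ℝ)) ^ p *
        sSup { v : ℝ | ∃ m ∈ LambdaSet L d, v = |vcoef L d θ V i (dpt L m) y| } *
        |wcoef V i y'| ≤
      ((2:ℝ)^(p*(d:ℝ)) + 3) * (sobolevNorm L d p (VhatC L d V))^2 := by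
  have hL1 : 1 ≤ L := by omega
  set S := ∑ y ∈ LambdaSet L d, Wt p y * |V y| with hSdef
  have hSob : sobolevNorm L d p (VhatC L d V) = S := sobolev_eq hL1 p V
  set N := ∑ z ∈ LambdaSet L d, |V z| with hNdef
  have hNnn : 0 ≤ N := Finset.sum_nonneg fun z _ => abs_nonneg _
  have hSnn : 0 ≤ S := sobolev_nonneg p V hL1
  have hNS : N ≤ S := N_le_S hp V
  have hpow_pos : (0:ℝ) < (2:ℝ)^(p*(d:ℝ)) := Real.rpow_pos_of_pos (by norm_num) _
  have hconv := conv_bound hL1 hp V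
  rw [hSob]
  obtain ⟨hi1, hi8⟩ := hi
  by_cases h5 : i ≤ 5
  · -- calV case
    have habsθ : |θ| = 1 := by rcases hθ with h | h <;> simp [h]
    have hsup : ∀ y ∈ LambdaSet L d,
        sSup { v : ℝ | ∃ m ∈ LambdaSet L d, v = |vcoef L d θ V i (dpt L m) y| }
        ≤ (if y = 0 then N^2 else 0) + 2*N*|V y| + |convVV L d V y| := by
      intro y hy
      apply csSup_le
      · exact ⟨_, ⟨0, zero_mem_LambdaSet hL1, rfl⟩⟩
      · rintro v ⟨m, hm, rfl⟩
        rw [vcoef, if_pos h5]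
        exact calV_abs_le habsθ V (dpt L m) y
    have hsupnn : ∀ y ∈ LambdaSet L d,
        Wt p y * sSup { v : ℝ | ∃ m ∈ LambdaSet L d, v = |vcoef L d θ V i (dpt L m) y| }
        ≤ Wt p y * ((if y = 0 then N^2 else 0) + 2*N*|V y| + |convVV L d V y|) :=
      fun y hy => mul_le_mul_of_nonneg_left (hsup y hy) (Wt_nonneg _ _)
    calc ∑ y ∈ LambdaSet L d, ∑ y' ∈ LambdaSet L d,
        (∏ j, reg (y j : ℝ) * reg (y' j : ℝ)) ^ p *
          sSup { v : ℝ | ∃ m ∈ LambdaSet L d, v = |vcoef L d θ V i (dpt L m) y| } *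
          |wcoef V i y'|
        = ∑ y ∈ LambdaSet L d, Wt p y *
            sSup { v : ℝ | ∃ m ∈ LambdaSet L d, v = |vcoef L d θ V i (dpt L m) y| } := by
          apply Finset.sum_congr rfl
          intro y hy
          rw [← inner_indicator hL1 p _ y]
          apply Finset.sum_congr rfl
          intro y' hy'
          rw [wcoef, if_pos (by omega : i ≤ 7)]
      _ ≤ ∑ y ∈ LambdaSet L d, Wt p y *
            ((if y = 0 then N^2 else 0) + 2*N*|V y| + |convVV L d V y|) :=
          Finset.sum_le_sum hsupnn
      _ = (∑ y ∈ LambdaSet L d, Wt p y * (if y = 0 then N^2 else 0))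
          + 2*N*(∑ y ∈ LambdaSet L d, Wt p y * |V y|)
          + ∑ y ∈ LambdaSet L d, Wt p y * |convVV L d V y| := by
          simp_rw [mul_add]
          rw [Finset.sum_add_distrib, Finset.sum_add_distrib]
          congr 1
          congr 1
          conv_rhs => rw [Finset.mul_sum]
          apply Finset.sum_congr rfl
          intro y _
          ring
      _ ≤ N^2 + 2*N*S + (2:ℝ)^(p*(d:ℝ)) * S^2 := by
          rw [sum_Wt_indicator hL1 p (N^2)]
          exact add_le_add (le_refl _) hconv
      _ ≤ ((2:ℝ)^(p*(d:ℝ)) + 3) * S^2 := by nlinarith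
  · by_cases h7 : i ≤ 7
    · -- convVV case
      have hset : ∀ y : Fin d → ℤ,
          { v : ℝ | ∃ m ∈ LambdaSet L d, v = |vcoef L d θ V i (dpt L m) y| }
          = {|convVV L d V y|} := by
        intro y
        ext v
        simp only [Set.mem_setOf_eq, Set.mem_singleton_iff, vcoef, if_neg h5, if_pos h7]
        constructor
        · rintro ⟨m, hm, rfl⟩; rfl
        · rintro rfl; exact ⟨0, zero_mem_LambdaSet hL1, rfl⟩
      calc ∑ y ∈ LambdaSet L d, ∑ y' ∈ LambdaSet L d,
          (∏ j, reg (y j : ℝ) * reg (y' j : ℝ)) ^ p *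
            sSup { v : ℝ | ∃ m ∈ LambdaSet L d, v = |vcoef L d θ V i (dpt L m) y| } *
            |wcoef V i y'|
          = ∑ y ∈ LambdaSet L d, Wt p y * |convVV L d V y| := by
            apply Finset.sum_congr rfl
            intro y hy
            rw [hset y, csSup_singleton]
            rw [← inner_indicator hL1 p (|convVV L d V y|) y]
            apply Finset.sum_congr rfl
            intro y' hy'
            rw [wcoef, if_pos h7]
        _ ≤ (2:ℝ)^(p*(d:ℝ)) * S^2 := hconv
        _ ≤ ((2:ℝ)^(p*(d:ℝ)) + 3) * S^2 := by nlinarith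
    · -- i = 8 case
      have hset : ∀ y : Fin d → ℤ,
          { v : ℝ | ∃ m ∈ LambdaSet L d, v = |vcoef L d θ V i (dpt L m) y| }
          = {2 * |V y|} := by
        intro y
        ext v
        simp only [Set.mem_setOf_eq, Set.mem_singleton_iff, vcoef, if_neg h5, if_neg h7]
        constructor
        · rintro ⟨m, hm, rfl⟩; rw [abs_mul]; norm_num
        · rintro rfl
          exact ⟨0, zero_mem_LambdaSet hL1, by rw [abs_mul]; norm_num⟩
      calc ∑ y ∈ LambdaSet L d, ∑ y' ∈ LambdaSet L d,
          (∏ j, reg (y j : ℝ) * reg (y' j : ℝ)) ^ p *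
            sSup { v : ℝ | ∃ m ∈ LambdaSet L d, v = |vcoef L d θ V i (dpt L m) y| } *
            |wcoef V i y'|
          = ∑ y ∈ LambdaSet L d, ∑ y' ∈ LambdaSet L d,
              (Wt p y * |V y|) * (Wt p y' * |V y'|) * 2 := by
            apply Finset.sum_congr rfl
            intro y hy
            apply Finset.sum_congr rfl
            intro y' hy'
            rw [hset y, csSup_singleton, wcoef, if_neg h7]
            rw [show (∏ j, reg (y j : ℝ) * reg (y' j : ℝ))
                = (∏ j, reg (y j : ℝ)) * (∏ j, reg (y' j : ℝ)) from Finset.prod_mul_distrib]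
            rw [Real.mul_rpow (Finset.prod_nonneg fun j _ => reg_nonneg _)
              (Finset.prod_nonneg fun j _ => reg_nonneg _), Wt_eq_rpow_prod, Wt_eq_rpow_prod]
            ring
        _ = (∑ y ∈ LambdaSet L d, ∑ y' ∈ LambdaSet L d,
              (Wt p y * |V y|) * (Wt p y' * |V y'|)) * 2 := by
            rw [Finset.sum_mul]
            apply Finset.sum_congr rfl
            intro y _
            rw [Finset.sum_mul]
        _ = 2 * S^2 := by
            rw [← Finset.sum_mul_sum (LambdaSet L d) (LambdaSet L d)
              (fun y => Wt p y * |V y|) (fun y' => Wt p y' * |V y'|)]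
            ring
        _ ≤ ((2:ℝ)^(p*(d:ℝ)) + 3) * S^2 := by nlinarith

end KWP
end
end

section
/- (Lemma 5.5, singular integral bound) Let β ∈ (0,1). Then for all s > 0 and r ≥ 0: ∫₀^{1/2} dk |r − s·sin(πk)|^{−(1−β)/2} ≤ (1 + 2/(πβ)) · s^{−(1−β)/2}. -/
noncomputable section

namespace KWP

open MeasureTheory Classical

open intervalIntegral

open Real in
lemma aux_sin_lb {d : ℝ} (h0 : 0 ≤ d) (h1 : d ≤ 1/2) :
    Real.sqrt 2 * d ≤ Real.sin (Real.pi * d / 2) := by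
  have hπ := Real.pi_pos
  have h := strictConcaveOn_sin_Icc.concaveOn.2
    (show (0:ℝ) ∈ Set.Icc (0:ℝ) π from ⟨le_rfl, pi_pos.le⟩)
    (show π/4 ∈ Set.Icc (0:ℝ) π from ⟨by positivity, by linarith⟩)
    (show (0:ℝ) ≤ 1 - 2*d by linarith) (show (0:ℝ) ≤ 2*d by linarith)
    (show (1 - 2*d) + 2*d = 1 by ring)
  simp only [smul_eq_mul, mul_zero, Real.sin_zero, Real.sin_pi_div_four, zero_add] at h
  have e2 : 2*d * (π/4) = π * d / 2 := by ring
  rw [e2] at h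
  have e1 : 2*d * (Real.sqrt 2 / 2) = Real.sqrt 2 * d := by ring
  rw [e1] at h
  exact h

open Real in
lemma trig1 {a b : ℝ} (ha : 0 ≤ a) (hab : a ≤ b) (hb : b ≤ 1/2) :
    4 * (b - a)^2 ≤ Real.sin (Real.pi*b) - Real.sin (Real.pi*a) := by
  have hπ := Real.pi_pos
  have hd0 : 0 ≤ b - a := by linarith
  have hd1 : b - a ≤ 1/2 := by linarith
  have h1 : Real.sqrt 2 * (b-a) ≤ Real.sin (Real.pi*(b-a)/2) := aux_sin_lb hd0 hd1
  have hcos : Real.sin (Real.pi*(b-a)/2) ≤ Real.cos ((Real.pi*b + Real.pi*a)/2) := by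
    rw [← Real.sin_pi_div_two_sub ((Real.pi*b + Real.pi*a)/2)]
    apply Real.strictMonoOn_sin.monotoneOn ⟨by nlinarith, by nlinarith⟩
      ⟨by nlinarith, by nlinarith⟩ (by nlinarith)
  rw [Real.sin_sub_sin]
  have e : (Real.pi*b - Real.pi*a)/2 = Real.pi*(b-a)/2 := by ring
  rw [e]
  have hs0 : 0 ≤ Real.sqrt 2 * (b-a) := by positivity
  have hsin0 : 0 ≤ Real.sin (Real.pi*(b-a)/2) := le_trans hs0 h1
  have hmul := mul_le_mul h1 (h1.trans hcos) hs0 hsin0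
  have hsq : Real.sqrt 2 * Real.sqrt 2 = 2 := Real.mul_self_sqrt (by norm_num)
  have e4 : Real.sqrt 2 * (b-a) * (Real.sqrt 2 * (b-a)) = 2*((b-a)*(b-a)) := by
    linear_combination ((b-a)*(b-a)) * hsq
  rw [e4] at hmul
  nlinarith [hmul]

open Real in
lemma trig2 {a b : ℝ} (ha : 0 ≤ a) (hab : a ≤ b) (hb : b ≤ 1/2) :
    4 * (1/2 - a) * (b - a) ≤ Real.sin (Real.pi*b) - Real.sin (Real.pi*a) := by
  have hπ := Real.pi_pos
  have hd0 : 0 ≤ b - a := by linarith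
  have hd1 : b - a ≤ 1/2 := by linarith
  have ha2 : a ≤ 1/2 := le_trans hab hb
  have h1 : Real.sqrt 2 * (b-a) ≤ Real.sin (Real.pi*(b-a)/2) := aux_sin_lb hd0 hd1
  have h2 : Real.sqrt 2 * (1/2-a) ≤ Real.sin (Real.pi*(1/2-a)/2) :=
    aux_sin_lb (by linarith) (by linarith)
  have hcos : Real.sin (Real.pi*(1/2-a)/2) ≤ Real.cos ((Real.pi*b + Real.pi*a)/2) := by
    rw [← Real.sin_pi_div_two_sub ((Real.pi*b + Real.pi*a)/2)]
    apply Real.strictMonoOn_sin.monotoneOn ⟨by nlinarith, by nlinarith⟩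
      ⟨by nlinarith, by nlinarith⟩ (by nlinarith)
  rw [Real.sin_sub_sin]
  have e : (Real.pi*b - Real.pi*a)/2 = Real.pi*(b-a)/2 := by ring
  rw [e]
  have hs0 : 0 ≤ Real.sqrt 2 * (b-a) := by positivity
  have hs0' : 0 ≤ Real.sqrt 2 * (1/2-a) := mul_nonneg (Real.sqrt_nonneg 2) (by linarith)
  have hsin0 : 0 ≤ Real.sin (Real.pi*(b-a)/2) := le_trans hs0 h1
  have hmul := mul_le_mul h1 (h2.trans hcos) hs0' hsin0
  have hsq : Real.sqrt 2 * Real.sqrt 2 = 2 := Real.mul_self_sqrt (by norm_num)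
  have e4 : Real.sqrt 2 * (b-a) * (Real.sqrt 2 * (1/2-a)) = 2*((b-a)*(1/2-a)) := by
    linear_combination ((b-a)*(1/2-a)) * hsq
  rw [e4] at hmul
  nlinarith [hmul]

lemma pow_helper {β A : ℝ} (hA : A = (1-β)/2) :
    (4:ℝ)^(-A) * ((1:ℝ)/2)^β = 1/2 := by
  have h4 : (4:ℝ)^(-A) = (2:ℝ)^(-(2*A)) := by
    rw [show (4:ℝ) = (2:ℝ)^((2:ℕ):ℝ) by rw [Real.rpow_natCast]; norm_num,
      ← Real.rpow_mul (by norm_num : (0:ℝ) ≤ 2)]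
    norm_num
  have h2 : ((1:ℝ)/2)^β = (2:ℝ)^(-β) := by
    rw [Real.rpow_neg (by norm_num : (0:ℝ) ≤ 2), one_div,
      Real.inv_rpow (by norm_num : (0:ℝ) ≤ 2)]
  rw [h4, h2, ← Real.rpow_add (by norm_num : (0:ℝ) < 2),
    show -(2*A) + -β = -1 by rw [hA]; ring, Real.rpow_neg_one]
  norm_num

/-- Region 1 : on `[0,t]` where `|r - s sin(πk)| ≥ 4s(t-k)²`. -/
lemma region1 {β s r : ℝ} (hβ0 : 0 < β) (hβ1 : β < 1) (hs : 0 < s) (t : ℝ)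
    (ht0 : 0 ≤ t) (ht : t ≤ 1/2)
    (hlow : ∀ k, 0 ≤ k → k ≤ t → 4*s*(t-k)^2 ≤ |r - s * Real.sin (Real.pi*k)|) :
    IntervalIntegrable (fun k => |r - s * Real.sin (Real.pi*k)| ^ (-((1-β)/2)))
      volume 0 t ∧
    (∫ k in (0:ℝ)..t, |r - s * Real.sin (Real.pi*k)| ^ (-((1-β)/2))) ≤
      2/(Real.pi*β) * s ^ (-((1-β)/2)) := by
  have hπ := Real.pi_pos
  set A : ℝ := (1-β)/2 with hA
  have hA0 : 0 < A := by rw [hA]; linarith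
  have hA2 : 2*A < 1 := by rw [hA]; linarith
  set f : ℝ → ℝ := fun k => |r - s * Real.sin (Real.pi*k)| ^ (-A) with hf
  set g : ℝ → ℝ := fun k => (4*s)^(-A) * (t - k) ^ (-(2*A)) with hg
  -- key pointwise bound
  have key : ∀ k, 0 ≤ k → k < t → f k ≤ g k := by
    intro k hk0 hkt
    have hpos : 0 < 4*s*(t-k)^2 := by
      have : 0 < t - k := by linarith
      positivity
    have h1 : f k ≤ (4*s*(t-k)^2) ^ (-A) :=
      Real.rpow_le_rpow_of_nonpos hpos (hlow k hk0 hkt.le) (by linarith)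
    have h2 : (4*s*(t-k)^2 : ℝ) ^ (-A) = g k := by
      have htk : (0:ℝ) ≤ t - k := by linarith
      rw [Real.mul_rpow (by positivity) (by positivity)]
      congr 1
      rw [show (t-k)^2 = (t-k)^((2:ℕ):ℝ) by rw [Real.rpow_natCast],
        ← Real.rpow_mul htk]
      norm_num
    rw [← h2]; exact h1
  -- integrability of g
  have hg_int : IntervalIntegrable g volume 0 t := by
    have h1 : IntervalIntegrable (fun u : ℝ => u ^ (-(2*A))) volume 0 t :=
      intervalIntegral.intervalIntegrable_rpow' (by linarith)
    have h2 := (h1.comp_sub_left t).symm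
    have h3 : IntervalIntegrable (fun k : ℝ => (t - k) ^ (-(2*A))) volume 0 t := by
      simpa using h2
    exact h3.const_mul _
  have hne : ∀ᵐ (x:ℝ) ∂volume, x ≠ t := by simp [MeasureTheory.ae_iff]
  have hgnn : ∀ k, k ≤ t → 0 ≤ g k := by
    intro k hk
    exact mul_nonneg (Real.rpow_nonneg (by positivity) _)
      (Real.rpow_nonneg (by linarith) _)
  -- integrability of f
  have hmeas : AEStronglyMeasurable f (volume.restrict (Set.uIoc 0 t)) := by
    apply Measurable.aestronglyMeasurable
    fun_prop
  have hf_int : IntervalIntegrable f volume 0 t := by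
    apply hg_int.mono_fun hmeas
    rw [Set.uIoc_of_le ht0]
    filter_upwards [ae_restrict_of_ae hne, ae_restrict_mem measurableSet_Ioc]
      with k hkne hkmem
    have hklt : k < t := lt_of_le_of_ne hkmem.2 hkne
    have hfk : 0 ≤ f k := Real.rpow_nonneg (abs_nonneg _) _
    rw [Real.norm_eq_abs, Real.norm_eq_abs, abs_of_nonneg hfk,
      abs_of_nonneg (hgnn k hkmem.2)]
    exact key k hkmem.1.le hklt
  constructor
  · exact hf_int
  -- compare integrals
  have hmono : (∫ k in (0:ℝ)..t, f k) ≤ ∫ k in (0:ℝ)..t, g k := by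
    apply intervalIntegral.integral_mono_ae_restrict ht0 hf_int hg_int
    filter_upwards [ae_restrict_of_ae hne, ae_restrict_mem measurableSet_Icc]
      with k hkne hkmem
    exact key k hkmem.1 (lt_of_le_of_ne hkmem.2 hkne)
  -- compute integral of g
  have hgval : (∫ k in (0:ℝ)..t, g k) = (4*s)^(-A) * (t^β / β) := by
    rw [hg, intervalIntegral.integral_const_mul]
    congr 1
    have h1 : (∫ x in (0:ℝ)..t, (t - x) ^ (-(2*A))) = ∫ x in (t-t)..(t-0), x ^ (-(2*A)) :=
      intervalIntegral.integral_comp_sub_left (fun u : ℝ => u ^ (-(2*A))) t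
    rw [sub_self, sub_zero] at h1
    rw [h1]
    rw [integral_rpow (Or.inl (by linarith))]
    rw [show -(2*A) + 1 = β by rw [hA]; ring, Real.zero_rpow hβ0.ne']
    ring
  -- final arithmetic
  have e1 : ((4:ℝ)*s)^(-A) = 4^(-A) * s^(-A) := Real.mul_rpow (by norm_num) hs.le
  have h2 : t^β ≤ ((1:ℝ)/2)^β := Real.rpow_le_rpow ht0 ht hβ0.le
  have h3 : (4:ℝ)^(-A) * ((1:ℝ)/2)^β = 1/2 := pow_helper hA
  have h4 : (1:ℝ)/2 ≤ 2/Real.pi := by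
    rw [div_le_div_iff₀ (by norm_num) hπ]
    linarith [Real.pi_le_four]
  have hsnn : 0 ≤ s^(-A) := Real.rpow_nonneg hs.le _
  have h6 : (4:ℝ)^(-A) * t^β ≤ 2/Real.pi := by
    calc (4:ℝ)^(-A) * t^β ≤ (4:ℝ)^(-A) * ((1:ℝ)/2)^β :=
          mul_le_mul_of_nonneg_left h2 (Real.rpow_nonneg (by norm_num) _)
      _ = 1/2 := h3
      _ ≤ 2/Real.pi := h4
  calc (∫ k in (0:ℝ)..t, f k) ≤ ∫ k in (0:ℝ)..t, g k := hmono
    _ = (4*s)^(-A) * (t^β / β) := hgval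
    _ = ((4:ℝ)^(-A) * t^β) * s^(-A) * (1/β) := by rw [e1]; ring
    _ ≤ (2/Real.pi) * s^(-A) * (1/β) := by
        apply mul_le_mul_of_nonneg_right _ (one_div_pos.2 hβ0).le
        exact mul_le_mul_of_nonneg_right h6 hsnn
    _ = 2/(Real.pi*β) * s^(-A) := by ring

/-- Region 2 : on `[t,1/2]` where `|r - s sin(πk)| ≥ 4s(1/2-t)(k-t)`. -/
lemma region2 {β s r : ℝ} (hβ0 : 0 < β) (hβ1 : β < 1) (hs : 0 < s) (t : ℝ)
    (ht0 : 0 ≤ t) (ht : t < 1/2)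
    (hlow : ∀ k, t ≤ k → k ≤ 1/2 → 4*s*(1/2-t)*(k-t) ≤ |r - s * Real.sin (Real.pi*k)|) :
    IntervalIntegrable (fun k => |r - s * Real.sin (Real.pi*k)| ^ (-((1-β)/2)))
      volume t (1/2) ∧
    (∫ k in t..(1/2:ℝ), |r - s * Real.sin (Real.pi*k)| ^ (-((1-β)/2))) ≤
      s ^ (-((1-β)/2)) := by
  have hπ := Real.pi_pos
  set A : ℝ := (1-β)/2 with hA
  have hA0 : 0 < A := by rw [hA]; linarith
  have hA1 : A < 1/2 := by rw [hA]; linarith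
  set y : ℝ := 1/2 - t with hy
  have hy0 : 0 < y := by rw [hy]; linarith
  set f : ℝ → ℝ := fun k => |r - s * Real.sin (Real.pi*k)| ^ (-A) with hf
  set g : ℝ → ℝ := fun k => (4*s*y)^(-A) * (k - t) ^ (-A) with hg
  have key : ∀ k, t < k → k ≤ 1/2 → f k ≤ g k := by
    intro k hkt hk2
    have hpos : 0 < 4*s*y*(k-t) := by
      have : 0 < k - t := by linarith
      positivity
    have h1 : f k ≤ (4*s*y*(k-t)) ^ (-A) := by
      apply Real.rpow_le_rpow_of_nonpos hpos _ (by linarith)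
      have := hlow k hkt.le hk2
      calc 4*s*y*(k-t) = 4*s*(1/2-t)*(k-t) := by rw [hy]
        _ ≤ _ := this
    have h2 : (4*s*y*(k-t) : ℝ) ^ (-A) = g k :=
      Real.mul_rpow (by positivity) (by linarith)
    rw [← h2]; exact h1
  have hg_int : IntervalIntegrable g volume t (1/2) := by
    have h1 : IntervalIntegrable (fun u : ℝ => u ^ (-A)) volume 0 y :=
      intervalIntegral.intervalIntegrable_rpow' (by linarith)
    have h2 := h1.comp_sub_right t
    have h3 : IntervalIntegrable (fun k : ℝ => (k - t) ^ (-A)) volume t (1/2) := by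
      have e : y + t = 1/2 := by rw [hy]; ring
      simpa [e] using h2
    exact h3.const_mul _
  have hne : ∀ᵐ (x:ℝ) ∂volume, x ≠ t := by simp [MeasureTheory.ae_iff]
  have hgnn : ∀ k, t ≤ k → 0 ≤ g k := by
    intro k hk
    exact mul_nonneg (Real.rpow_nonneg (by positivity) _)
      (Real.rpow_nonneg (by linarith) _)
  have hmeas : AEStronglyMeasurable f (volume.restrict (Set.uIoc t (1/2))) := by
    apply Measurable.aestronglyMeasurable
    fun_prop
  have hf_int : IntervalIntegrable f volume t (1/2) := by
    apply hg_int.mono_fun hmeas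
    rw [Set.uIoc_of_le ht.le]
    filter_upwards [ae_restrict_mem measurableSet_Ioc] with k hkmem
    have hfk : 0 ≤ f k := Real.rpow_nonneg (abs_nonneg _) _
    rw [Real.norm_eq_abs, Real.norm_eq_abs, abs_of_nonneg hfk,
      abs_of_nonneg (hgnn k hkmem.1.le)]
    exact key k hkmem.1 hkmem.2
  constructor
  · exact hf_int
  have hmono : (∫ k in t..(1/2:ℝ), f k) ≤ ∫ k in t..(1/2:ℝ), g k := by
    apply intervalIntegral.integral_mono_ae_restrict ht.le hf_int hg_int
    filter_upwards [ae_restrict_of_ae hne, ae_restrict_mem measurableSet_Icc]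
      with k hkne hkmem
    exact key k (lt_of_le_of_ne hkmem.1 (Ne.symm hkne)) hkmem.2
  have hgval : (∫ k in t..(1/2:ℝ), g k) = (4*s*y)^(-A) * (y^(1-A) / (1-A)) := by
    rw [hg, intervalIntegral.integral_const_mul]
    congr 1
    have h1 : (∫ x in t..(1/2:ℝ), (x - t) ^ (-A)) = ∫ x in (t-t)..((1/2:ℝ)-t), x ^ (-A) :=
      intervalIntegral.integral_comp_sub_right (fun u : ℝ => u ^ (-A)) t
    rw [sub_self, show (1:ℝ)/2 - t = y from by rw [hy]] at h1
    rw [h1]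
    rw [integral_rpow (Or.inl (by linarith))]
    rw [show -A + 1 = 1 - A by ring, Real.zero_rpow (by linarith)]
    ring
  -- final arithmetic
  have e1 : ((4:ℝ)*s*y)^(-A) = 4^(-A) * s^(-A) * y^(-A) := by
    rw [Real.mul_rpow (by positivity) hy0.le, Real.mul_rpow (by norm_num) hs.le]
  have e2 : y^(-A) * y^(1-A) = y^β := by
    rw [← Real.rpow_add hy0, show -A + (1-A) = β by rw [hA]; ring]
  have h2 : y^β ≤ ((1:ℝ)/2)^β := Real.rpow_le_rpow hy0.le (by rw [hy]; linarith) hβ0.le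
  have h3 : (4:ℝ)^(-A) * ((1:ℝ)/2)^β = 1/2 := pow_helper hA
  have hsnn : 0 ≤ s^(-A) := Real.rpow_nonneg hs.le _
  have h1A : 1/2 ≤ 1 - A := by linarith
  have h4nn : 0 ≤ (4:ℝ)^(-A) := Real.rpow_nonneg (by norm_num) _
  have h5 : (4*s*y)^(-A) * (y^(1-A) / (1-A)) ≤ s^(-A) := by
    have e3 : (4*s*y)^(-A) * (y^(1-A) / (1-A)) = (4^(-A) * (y^(-A) * y^(1-A))) * s^(-A) / (1-A) := by
      rw [e1]; ring
    rw [e3, e2]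
    have h6 : (4:ℝ)^(-A) * y^β ≤ 1/2 := by
      calc (4:ℝ)^(-A) * y^β ≤ (4:ℝ)^(-A) * ((1:ℝ)/2)^β := by
            exact mul_le_mul_of_nonneg_left h2 h4nn
        _ = 1/2 := h3
    rw [div_le_iff₀ (by linarith : (0:ℝ) < 1 - A)]
    nlinarith [h6, hsnn]
  calc (∫ k in t..(1/2:ℝ), f k) ≤ ∫ k in t..(1/2:ℝ), g k := hmono
    _ = (4*s*y)^(-A) * (y^(1-A) / (1-A)) := hgval
    _ ≤ s^(-A) := h5

theorem singular_integral_bound (β : ℝ) (hβ : 0 < β ∧ β < 1)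
    (s r : ℝ) (hs : 0 < s) (hr : 0 ≤ r) :
    (∫ k in (0:ℝ)..(1/2), |r - s * Real.sin (Real.pi * k)| ^ (-((1-β)/2))) ≤
      (1 + 2/(Real.pi*β)) * s ^ (-((1-β)/2)) := by
  obtain ⟨hβ0, hβ1⟩ := hβ
  have hπ := Real.pi_pos
  have hsnn : 0 ≤ s ^ (-((1-β)/2)) := Real.rpow_nonneg hs.le _
  by_cases hrs : r < s
  · -- r < s
    have hc0 : 0 ≤ r/s := div_nonneg hr hs.le
    have hc1 : r/s < 1 := (div_lt_one hs).2 hrs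
    set t : ℝ := Real.arcsin (r/s) / Real.pi with htdef
    have ht0 : 0 ≤ t := div_nonneg (Real.arcsin_nonneg.2 hc0) hπ.le
    have ht : t < 1/2 := by
      rw [htdef, div_lt_iff₀ hπ]
      have := Real.arcsin_lt_pi_div_two.2 hc1
      linarith
    have hsin : Real.sin (Real.pi * t) = r/s := by
      rw [htdef, mul_div_cancel₀ _ hπ.ne']
      exact Real.sin_arcsin (by linarith) hc1.le
    have hrt : r = s * Real.sin (Real.pi*t) := by
      rw [hsin]; field_simp
    have hlow1 : ∀ k, 0 ≤ k → k ≤ t → 4*s*(t-k)^2 ≤ |r - s * Real.sin (Real.pi*k)| := by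
      intro k hk0 hkt
      have h := trig1 hk0 hkt ht.le
      have hnn : 0 ≤ r - s * Real.sin (Real.pi*k) := by
        rw [hrt]; nlinarith
      rw [abs_of_nonneg hnn, hrt]
      nlinarith
    have hlow2 : ∀ k, t ≤ k → k ≤ 1/2 → 4*s*(1/2-t)*(k-t) ≤ |r - s * Real.sin (Real.pi*k)| := by
      intro k hkt hk2
      have h := trig2 ht0 hkt hk2
      have hd : 0 ≤ Real.sin (Real.pi*k) - Real.sin (Real.pi*t) := by
        have h9 : (0:ℝ) ≤ (1/2 - t)*(k - t) := mul_nonneg (by linarith) (by linarith)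
        linarith [h, h9]
      have hnn : 0 ≤ s * Real.sin (Real.pi*k) - r := by
        rw [hrt]
        have := mul_nonneg hs.le hd
        linarith [this]
      rw [abs_sub_comm, show s * Real.sin (Real.pi*k) - r = s * Real.sin (Real.pi*k) - r from rfl,
        abs_of_nonneg hnn, hrt]
      nlinarith
    obtain ⟨hi1, hb1⟩ := region1 hβ0 hβ1 hs t ht0 ht.le hlow1
    obtain ⟨hi2, hb2⟩ := region2 hβ0 hβ1 hs t ht0 ht hlow2
    rw [← intervalIntegral.integral_add_adjacent_intervals hi1 hi2]
    have := add_le_add hb1 hb2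
    calc _ ≤ 2/(Real.pi*β) * s ^ (-((1-β)/2)) + s ^ (-((1-β)/2)) := this
      _ = (1 + 2/(Real.pi*β)) * s ^ (-((1-β)/2)) := by ring
  · -- s ≤ r
    push_neg at hrs
    have hlow : ∀ k, 0 ≤ k → k ≤ 1/2 → 4*s*((1/2:ℝ)-k)^2 ≤ |r - s * Real.sin (Real.pi*k)| := by
      intro k hk0 hk2
      have h := trig1 hk0 hk2 (le_refl (1/2 : ℝ))
      rw [show Real.pi * (1/2:ℝ) = Real.pi/2 by ring, Real.sin_pi_div_two] at h
      have hsin1 : Real.sin (Real.pi*k) ≤ 1 := Real.sin_le_one _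
      have hnn : 0 ≤ r - s * Real.sin (Real.pi*k) := by nlinarith
      rw [abs_of_nonneg hnn]
      nlinarith
    obtain ⟨hi1, hb1⟩ := region1 hβ0 hβ1 hs (1/2) (by norm_num) (le_refl _) hlow
    have hpos : 0 ≤ 2/(Real.pi*β) := by positivity
    calc (∫ k in (0:ℝ)..(1/2), |r - s * Real.sin (Real.pi * k)| ^ (-((1-β)/2)))
        ≤ 2/(Real.pi*β) * s ^ (-((1-β)/2)) := hb1
      _ ≤ (1 + 2/(Real.pi*β)) * s ^ (-((1-β)/2)) := by nlinarith
  
end KWP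
end
end

section
/- (Quadratic integral inequality, proved within Proposition 6.2) Let a ≥ 0 and c > 0, and let S satisfy 0 ≤ S ≤ 1/(c·a) (with 1/(c·a) interpreted as +∞ when a = 0). Suppose h : [0,S] → ℝ is continuous, h(0) = 0, and h(s) ≤ a·s + (c/4)·h(s)² for all s ∈ [0,S]. Then h(s) ≤ (2/c)·(1 − √(1 − c·a·s)) for all s ∈ [0,S]. -/
noncomputable section

namespace KWP

open MeasureTheory Classical

theorem quadratic_integral_inequality (a c : ℝ) (ha : 0 ≤ a) (hc : 0 < c)
    (S : ℝ) (hS0 : 0 ≤ S) (hS : a = 0 ∨ S ≤ 1/(c*a))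
    (h : ℝ → ℝ) (hcont : ContinuousOn h (Set.Icc 0 S)) (h0 : h 0 = 0)
    (hineq : ∀ s ∈ Set.Icc (0:ℝ) S, h s ≤ a*s + (c/4)*(h s)^2) :
    ∀ s ∈ Set.Icc (0:ℝ) S, h s ≤ (2/c)*(1 - Real.sqrt (1 - c*a*s)) := by
  -- nonnegativity of the discriminant
  have hD : ∀ s ∈ Set.Icc (0:ℝ) S, 0 ≤ 1 - c*a*s := by
    intro s hs
    rcases eq_or_lt_of_le ha with h0a | h0a
    · simp [← h0a]
    · rcases hS with rfl' | hSle
      · simp [rfl']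
      · have hca : 0 < c*a := mul_pos hc h0a
        have : c*a*s ≤ c*a*(1/(c*a)) :=
          mul_le_mul_of_nonneg_left (hs.2.trans hSle) hca.le
        rw [mul_one_div, div_self hca.ne'] at this
        linarith
  -- dichotomy
  have dich : ∀ s ∈ Set.Icc (0:ℝ) S,
      h s ≤ (2/c)*(1 - Real.sqrt (1 - c*a*s)) ∨
      (2/c)*(1 + Real.sqrt (1 - c*a*s)) ≤ h s := by
    intro s hs
    have hx2 : 1 - c*a*s ≤ (c/2*h s - 1)^2 := by nlinarith [hineq s hs]
    have hsq : Real.sqrt (1 - c*a*s) ≤ |c/2*h s - 1| := by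
      calc Real.sqrt (1 - c*a*s) ≤ Real.sqrt ((c/2*h s - 1)^2) :=
            Real.sqrt_le_sqrt hx2
        _ = |c/2*h s - 1| := Real.sqrt_sq_eq_abs _
    rcases le_abs.mp hsq with h1 | h1
    · right
      rw [div_mul_eq_mul_div, div_le_iff₀ hc]
      linarith
    · left
      rw [div_mul_eq_mul_div, le_div_iff₀ hc]
      linarith
  intro s₀ hs₀
  by_contra hcon
  push_neg at hcon
  -- the set where the lower branch holds, up to s₀
  set T : Set ℝ := {s | s ∈ Set.Icc (0:ℝ) s₀ ∧
      h s ≤ (2/c)*(1 - Real.sqrt (1 - c*a*s))} with hTdef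
  have hsub : Set.Icc (0:ℝ) s₀ ⊆ Set.Icc (0:ℝ) S :=
    Set.Icc_subset_Icc le_rfl hs₀.2
  have h0T : (0:ℝ) ∈ T := by
    constructor
    · exact ⟨le_rfl, hs₀.1⟩
    · simp [h0]
  have hTne : T.Nonempty := ⟨0, h0T⟩
  -- T is compact
  have hcontg : ContinuousOn (fun s => h s - (2/c)*(1 - Real.sqrt (1 - c*a*s)))
      (Set.Icc 0 s₀) := by
    apply (hcont.mono hsub).sub
    fun_prop
  have hTclosed : IsClosed T := by
    have : T = Set.Icc (0:ℝ) s₀ ∩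
        (fun s => h s - (2/c)*(1 - Real.sqrt (1 - c*a*s))) ⁻¹' Set.Iic 0 := by
      ext s
      simp only [hTdef, Set.mem_setOf_eq, Set.mem_inter_iff, Set.mem_preimage,
        Set.mem_Iic, sub_nonpos]
    rw [this]
    exact hcontg.preimage_isClosed_of_isClosed isClosed_Icc isClosed_Iic
  have hTcomp : IsCompact T :=
    isCompact_Icc.of_isClosed_subset hTclosed (fun s hs => hs.1)
  set t := sSup T with htdef
  have htT : t ∈ T := hTcomp.sSup_mem hTne
  have htIcc : t ∈ Set.Icc (0:ℝ) s₀ := htT.1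
  have htlow : h t ≤ (2/c)*(1 - Real.sqrt (1 - c*a*t)) := htT.2
  have htne : t ≠ s₀ := by
    intro he; rw [he] at htlow; exact absurd htlow (not_le.mpr hcon)
  have htlt : t < s₀ := lt_of_le_of_ne htIcc.2 htne
  -- sqrt is strictly positive at t
  have hDt : 0 < 1 - c*a*t := by
    rcases eq_or_lt_of_le ha with h0a | h0a
    · simp [← h0a]
    · rcases hS with rfl' | hSle
      · exact absurd rfl' h0a.ne'
      · have hca : 0 < c*a := mul_pos hc h0a
        have : c*a*t < c*a*(1/(c*a)) :=
          mul_lt_mul_of_pos_left (lt_of_lt_of_le (htlt.trans_le hs₀.2) hSle) hca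
        rw [mul_one_div, div_self hca.ne'] at this
        linarith
  have hsqt : 0 < Real.sqrt (1 - c*a*t) := Real.sqrt_pos.mpr hDt
  -- the "upper branch gap" function
  set g : ℝ → ℝ := fun s => (2/c)*(1 + Real.sqrt (1 - c*a*s)) - h s with hgdef
  have hgcont : ContinuousOn g (Set.Icc 0 s₀) := by
    apply ContinuousOn.sub _ (hcont.mono hsub)
    fun_prop
  have hgt : 0 < g t := by
    have : (2/c)*(1 - Real.sqrt (1 - c*a*t)) < (2/c)*(1 + Real.sqrt (1 - c*a*t)) := by
      apply mul_lt_mul_of_pos_left _ (by positivity)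
      linarith
    simp only [hgdef]
    linarith
  have hev : ∀ᶠ s in nhdsWithin t (Set.Icc 0 s₀), 0 < g s :=
    (hgcont t htIcc).eventually (eventually_gt_nhds hgt)
  rw [Filter.eventually_iff, Metric.mem_nhdsWithin_iff] at hev
  obtain ⟨δ, hδ, hball⟩ := hev
  set s₁ := min (t + δ/2) s₀ with hs₁def
  have hts₁ : t < s₁ := lt_min (by linarith) htlt
  have hs₁Icc : s₁ ∈ Set.Icc (0:ℝ) s₀ :=
    ⟨le_trans htIcc.1 hts₁.le, min_le_right _ _⟩
  have hdist : dist s₁ t < δ := by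
    rw [Real.dist_eq, abs_of_nonneg (by linarith)]
    have : s₁ ≤ t + δ/2 := min_le_left _ _
    linarith
  have hgs₁ : 0 < g s₁ := hball ⟨Metric.mem_ball.mpr hdist, hs₁Icc⟩
  have hupper : h s₁ < (2/c)*(1 + Real.sqrt (1 - c*a*s₁)) := by
    simp only [hgdef] at hgs₁; linarith
  have hs₁S : s₁ ∈ Set.Icc (0:ℝ) S := hsub hs₁Icc
  rcases dich s₁ hs₁S with hlo | hhi
  · have : s₁ ∈ T := ⟨hs₁Icc, hlo⟩
    have : s₁ ≤ t := le_csSup hTcomp.bddAbove this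
    linarith
  · linarith

end KWP
end
end

section
/- (Nonlinear Grönwall bound, proved within Proposition 6.2) Let c > 0 and T* > 0. Suppose g : [0,T*] → [0,∞) is continuous, g(0) > 0, and satisfies g(T) ≤ g(0) + (c/2)·g(T)·∫₀^T g(t) dt for all T ∈ [0,T*]. Then for every T ∈ [0,T*] with c·g(0)·T < 1: g(T) ≤ g(0)/√(1 − c·g(0)·T). -/
noncomputable section

namespace KWP

open MeasureTheory Classical

theorem nonlinear_gronwall_bound (c Tstar : ℝ) (hc : 0 < c) (hT : 0 < Tstar)
    (g : ℝ → ℝ) (hcont : ContinuousOn g (Set.Icc 0 Tstar))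
    (hnn : ∀ t ∈ Set.Icc (0:ℝ) Tstar, 0 ≤ g t) (hg0 : 0 < g 0)
    (hineq : ∀ T ∈ Set.Icc (0:ℝ) Tstar, g T ≤ g 0 + (c/2) * g T * ∫ t in (0:ℝ)..T, g t) :
    ∀ T ∈ Set.Icc (0:ℝ) Tstar, c * g 0 * T < 1 →
      g T ≤ g 0 / Real.sqrt (1 - c * g 0 * T) := by
  -- G : continuous extension of g to all of ℝ
  set G : ℝ → ℝ := fun t => g (max 0 (min t Tstar)) with hGdef
  have hproj : ∀ t : ℝ, max 0 (min t Tstar) ∈ Set.Icc (0:ℝ) Tstar := fun t =>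
    ⟨le_max_left _ _, max_le hT.le (min_le_right _ _)⟩
  have hGcont : Continuous G :=
    hcont.comp_continuous
      (continuous_const.max (continuous_id.min continuous_const)) hproj
  have hGeq : ∀ t ∈ Set.Icc (0:ℝ) Tstar, G t = g t := by
    intro t ht
    simp only [hGdef]
    rw [min_eq_left ht.2, max_eq_right ht.1]
  have hGnn : ∀ t : ℝ, 0 ≤ G t := fun t => hnn _ (hproj t)
  -- h : the running integral of G
  set h : ℝ → ℝ := fun s => ∫ t in (0:ℝ)..s, G t with hhdef
  have hderiv : ∀ s : ℝ, HasDerivAt h (G s) s := fun s =>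
    intervalIntegral.integral_hasDerivAt_right (hGcont.intervalIntegrable 0 s)
      hGcont.aestronglyMeasurable.stronglyMeasurableAtFilter hGcont.continuousAt
  have hcont_h : Continuous h :=
    continuous_iff_continuousAt.2 fun s => (hderiv s).continuousAt
  have hh0 : h 0 = 0 := intervalIntegral.integral_same
  -- h agrees with integral of g on [0,Tstar]
  have hint_eq : ∀ t ∈ Set.Icc (0:ℝ) Tstar, h t = ∫ u in (0:ℝ)..t, g u := by
    intro t ht
    apply intervalIntegral.integral_congr
    intro u hu
    rw [Set.uIcc_of_le ht.1] at hu
    exact hGeq u ⟨hu.1, hu.2.trans ht.2⟩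
  -- pointwise inequality for G
  have hGineq : ∀ t ∈ Set.Icc (0:ℝ) Tstar, G t ≤ g 0 + (c/2) * G t * h t := by
    intro t ht
    rw [hGeq t ht, hint_eq t ht]
    exact hineq t ht
  -- integrated quadratic inequality
  have hquad : ∀ s ∈ Set.Icc (0:ℝ) Tstar, h s ≤ g 0 * s + (c/4) * (h s)^2 := by
    intro s hs
    have hsq : (∫ t in (0:ℝ)..s, G t * h t) = (h s)^2 / 2 := by
      have hd : ∀ x ∈ Set.uIcc (0:ℝ) s, HasDerivAt (fun u => (h u)^2 / 2) (G x * h x) x := by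
        intro x _
        have := ((hderiv x).pow 2).div_const 2
        refine this.congr_deriv ?_
        push_cast
        ring
      have := intervalIntegral.integral_eq_sub_of_hasDerivAt hd
        ((hGcont.mul hcont_h).intervalIntegrable 0 s)
      rw [this, hh0]
      ring
    have hmono : h s ≤ ∫ t in (0:ℝ)..s, (g 0 + (c/2) * G t * h t) := by
      apply intervalIntegral.integral_mono_on hs.1
        (hGcont.intervalIntegrable 0 s)
        ((continuous_const.add ((continuous_const.mul hGcont).mul hcont_h)).intervalIntegrable 0 s)
      intro x hx
      exact hGineq x ⟨hx.1, hx.2.trans hs.2⟩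
    have hsplit : (∫ t in (0:ℝ)..s, (g 0 + (c/2) * G t * h t))
        = g 0 * s + (c/2) * ∫ t in (0:ℝ)..s, G t * h t := by
      rw [intervalIntegral.integral_add (f := fun _ => g 0) (g := fun t => c/2 * G t * h t) (intervalIntegrable_const)
        (((continuous_const.mul hGcont).mul hcont_h).intervalIntegrable 0 s)]
      rw [intervalIntegral.integral_const]
      have : (∫ t in (0:ℝ)..s, (c/2) * G t * h t) = (c/2) * ∫ t in (0:ℝ)..s, G t * h t := by
        rw [← intervalIntegral.integral_const_mul]
        congr 1
        ext t
        ring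
      rw [this]
      simp [smul_eq_mul]
      ring
    rw [hsplit, hsq] at hmono
    calc h s ≤ g 0 * s + (c/2) * ((h s)^2 / 2) := hmono
      _ = g 0 * s + (c/4) * (h s)^2 := by ring
  -- no crossing of the level 2/c before time T when c*g0*T < 1
  intro T hTmem hTlt
  have hT0 : (0:ℝ) ≤ T := hTmem.1
  have hnocross : ∀ s ∈ Set.Icc (0:ℝ) T, h s ≠ 2/c := by
    intro s hs habs
    have hsmem : s ∈ Set.Icc (0:ℝ) Tstar := ⟨hs.1, hs.2.trans hTmem.2⟩
    have := hquad s hsmem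
    rw [habs] at this
    have hs1 : c * g 0 * s ≤ c * g 0 * T :=
      mul_le_mul_of_nonneg_left hs.2 (by positivity)
    have hkey1 : c * (2/c) = 2 := by field_simp
    have hkey2 : c * (c/4 * (2/c)^2) = 1 := by field_simp; ring
    have := mul_le_mul_of_nonneg_left this hc.le
    nlinarith [hg0, hs.1]
  have hlt2c : h T < 2/c := by
    by_contra hge
    push_neg at hge
    have h2c_mem : (2/c) ∈ Set.Icc (h 0) (h T) := ⟨by rw [hh0]; positivity, hge⟩
    obtain ⟨s, hs, hval⟩ := intermediate_value_Icc hT0 (hcont_h.continuousOn) h2c_mem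
    exact hnocross s hs hval
  -- the square root
  set r : ℝ := Real.sqrt (1 - c * g 0 * T) with hrdef
  have hrpos : 0 < r := Real.sqrt_pos.2 (by linarith)
  have hr2 : r^2 = 1 - c * g 0 * T := Real.sq_sqrt (by linarith)
  have hr1 : r ≤ 1 := by
    rw [hrdef]
    have h1 : Real.sqrt (1 - c * g 0 * T) ≤ Real.sqrt 1 :=
      Real.sqrt_le_sqrt (by nlinarith [mul_nonneg (mul_nonneg hc.le hg0.le) hT0])
    simpa using h1
  -- main bound on h T
  have hhT : h T ≤ (2/c) * (1 - r) := by
    by_contra hgt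
    push_neg at hgt
    have hq := hquad T hTmem
    have hx : c * h T ≤ c * (g 0 * T) + (c * h T)^2 / 4 := by
      nlinarith [mul_le_mul_of_nonneg_left hq hc.le]
    have hgt' : 2 * (1 - r) < c * h T := by
      rw [div_mul_eq_mul_div, div_lt_iff₀ hc] at hgt
      linarith
    have hlt2c' : c * h T < 2 := by
      rw [lt_div_iff₀ hc] at hlt2c
      linarith
    have h2' : c * h T < 2 * (1 + r) := by linarith
    have h1 : 0 < c * h T - 2 * (1 - r) := by linarith
    have h2 : 0 < 2 * (1 + r) - c * h T := by linarith
    nlinarith [mul_pos h1 h2, hr2, hx]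
  -- conclude
  have hgT := hineq T hTmem
  rw [← hint_eq T hTmem] at hgT
  have hgTnn : 0 ≤ g T := hnn T hTmem
  have hkey : g T * r ≤ g 0 := by
    have hfac : g T * (1 - (c/2) * h T) ≤ g 0 := by nlinarith [hgT]
    have hhT' : h T * c ≤ 2 * (1 - r) := by
      rw [div_mul_eq_mul_div, le_div_iff₀ hc] at hhT
      linarith
    have hler : r ≤ 1 - (c/2) * h T := by nlinarith [hhT']
    nlinarith [mul_le_mul_of_nonneg_left hler hgTnn]
  rw [le_div_iff₀ hrpos]
  exact hkey

end KWP
end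
end

section
/- (Lemma A.1, finite-volume versus infinite-volume 1D propagator) Define Q(x;R,u,L) := L^{−1} Σ_{k∈Λ₁*} e^{i2πkx + iR cos(2π(k+u))} for x ∈ Λ₁, R,u ∈ ℝ, integer L ≥ 2, and I(y;R,u) := ∫_{−1/2}^{1/2} dk e^{i2πky + iR cos(2π(k+u))} for y ∈ ℤ. Then there exist pure constants C, δ₀ > 0 (one may take δ₀ = (ln 2)/2) such that for all integers L ≥ 2, all R, u ∈ ℝ, and all x ∈ Λ₁: |Q(x;R,u,L) − I(x;R,u)| ≤ C e^{−δ₀(L − 4|R|)₊}. -/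
noncomputable section

namespace KWP

open MeasureTheory Classical

/-- the 1D infinite-volume propagator `I(y;R,u)` -/
def I1 (y : ℤ) (R u : ℝ) : ℂ :=
  ∫ k in (-(1:ℝ)/2)..(1/2),
    Complex.exp (2*Real.pi*Complex.I*((k*(y:ℝ) : ℝ):ℂ) +
      Complex.I*((R*Real.cos (2*Real.pi*(k+u)) : ℝ):ℂ))

/-- the 1D finite-lattice propagator `Q(x;R,u,L)` -/
def Q1 (L : ℕ) (x : ℤ) (R u : ℝ) : ℂ :=
  ((L:ℂ))⁻¹ * ∑ m ∈ Lambda1 L,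
    Complex.exp (2*Real.pi*Complex.I*(((m:ℝ)/(L:ℝ)*(x:ℝ) : ℝ):ℂ) +
      Complex.I*((R*Real.cos (2*Real.pi*((m:ℝ)/(L:ℝ)+u)) : ℝ):ℂ))

/-! ### Auxiliary development for the comparison theorem -/

open Complex in
/-- the basic coefficient `iR/2` -/
def cw (R : ℝ) : ℂ := Complex.I * (R:ℂ) / 2

open Complex in
/-- term of the double exponential series for `e^{iR cos θ}` -/
def hterm (R θ : ℝ) (z : ℕ × ℕ) : ℂ :=
  (cw R ^ z.1 / (z.1.factorial : ℂ) * Complex.exp (Complex.I * z.1 * θ)) *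
  (cw R ^ z.2 / (z.2.factorial : ℂ) * Complex.exp (-(Complex.I * z.2 * θ)))

/-- real bound for the terms -/
def nbd (t : ℝ) (z : ℕ × ℕ) : ℝ := t ^ z.1 / (z.1.factorial : ℝ) * (t ^ z.2 / (z.2.factorial : ℝ))

open Complex in
/-- phase coefficient -/
def coefQI (R u : ℝ) (z : ℕ × ℕ) : ℂ :=
  cw R ^ (z.1 + z.2) / ((z.1.factorial : ℂ) * (z.2.factorial : ℂ)) *
    Complex.exp (Complex.I * ((z.1 : ℂ) - (z.2 : ℂ)) * (2*Real.pi*u))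

/-- the bound function -/
def fbd (L : ℕ) (x : ℤ) (t : ℝ) (z : ℕ × ℕ) : ℝ :=
  if (L:ℤ) ∣ (x + z.1 - z.2) ∧ (x + (z.1:ℤ) - z.2) ≠ 0
  then t ^ (z.1 + z.2) / ((z.1.factorial : ℝ) * (z.2.factorial : ℝ)) else 0

lemma lambda1_eq (L : ℕ) : Lambda1 L = Finset.Icc ((L:ℤ)/2 - L + 1) ((L:ℤ)/2) := by
  ext z
  simp only [Lambda1, Finset.mem_filter, Finset.mem_Icc]
  omega

lemma card_lambda1 (L : ℕ) : (Lambda1 L).card = L := by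
  rw [lambda1_eq, Int.card_Icc]
  omega

lemma abs_le_of_mem_lambda1 {L : ℕ} {x : ℤ} (hx : x ∈ Lambda1 L) : 2 * |x| ≤ (L:ℤ) := by
  rw [lambda1_eq, Finset.mem_Icc] at hx
  rcases abs_cases x with ⟨h1, h2⟩ | ⟨h1, h2⟩ <;> omega

lemma norm_cw (R : ℝ) : ‖cw R‖ = |R| / 2 := by
  rw [cw, norm_div, norm_mul, Complex.norm_I, Complex.norm_real, Real.norm_eq_abs,
    Complex.norm_two, one_mul]

lemma norm_exp_I_mul (a θ : ℝ) : ‖Complex.exp (Complex.I * a * θ)‖ = 1 := by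
  rw [Complex.norm_exp]
  simp [Complex.mul_re]

lemma norm_exp_pure_imag (c : ℂ) (hc : c.re = 0) : ‖Complex.exp c‖ = 1 := by
  rw [Complex.norm_exp, hc, Real.exp_zero]

lemma re_arg0 (v : ℝ) : (2*Real.pi*Complex.I*(v:ℂ)).re = 0 := by
  simp only [Complex.mul_re, Complex.mul_im, Complex.I_re, Complex.I_im,
    Complex.ofReal_re, Complex.ofReal_im, Complex.re_ofNat, Complex.im_ofNat]
  ring

lemma re_arg_eq_zero (v w : ℝ) :
    (2*Real.pi*Complex.I*(v:ℂ) + Complex.I*(w:ℂ)).re = 0 := by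
  simp only [Complex.add_re, Complex.mul_re, Complex.mul_im, Complex.I_re, Complex.I_im,
    Complex.ofReal_re, Complex.ofReal_im, Complex.re_ofNat, Complex.im_ofNat]
  ring

lemma norm_hterm (R θ : ℝ) (z : ℕ × ℕ) : ‖hterm R θ z‖ = nbd (|R|/2) z := by
  rw [hterm, nbd, norm_mul, norm_mul, norm_mul, norm_div, norm_div, norm_pow, norm_pow, norm_cw]
  rw [norm_exp_pure_imag _ (by simp), norm_exp_pure_imag _ (by simp)]
  push_cast
  simp [Complex.norm_natCast]

lemma nbd_nonneg (t : ℝ) (ht : 0 ≤ t) (z : ℕ × ℕ) : 0 ≤ nbd t z := by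
  have h1 : (0:ℝ) ≤ t ^ z.1 / (z.1.factorial : ℝ) := by positivity
  have h2 : (0:ℝ) ≤ t ^ z.2 / (z.2.factorial : ℝ) := by positivity
  exact mul_nonneg h1 h2

lemma summable_nbd (t : ℝ) : Summable (nbd t) := by
  have h : Summable fun n : ℕ => ‖t ^ n / (n.factorial : ℝ)‖ :=
    summable_norm_iff.mpr (Real.summable_pow_div_factorial t)
  have h2 := summable_mul_of_summable_norm h h
  exact h2.congr (fun z => rfl)

lemma summable_hterm (R θ : ℝ) : Summable (hterm R θ) := by
  apply Summable.of_norm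
  apply (summable_nbd (|R|/2)).congr
  intro z
  exact (norm_hterm R θ z).symm

lemma summable_norm_factor (R : ℝ) (E : ℂ) (hE : ‖E‖ = 1) :
    Summable (fun n : ℕ => ‖(cw R * E)^n / (n.factorial:ℂ)‖) := by
  have h : ∀ n : ℕ, ‖(cw R * E)^n / (n.factorial:ℂ)‖ = (|R|/2)^n / (n.factorial:ℝ) := by
    intro n
    rw [norm_div, norm_pow, norm_mul, norm_cw, hE, mul_one, Complex.norm_natCast]
  exact ((Real.summable_pow_div_factorial _).congr (fun n => (h n).symm))

open Complex in
lemma gexp_eq (R θ : ℝ) :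
    Complex.exp (Complex.I * ((R * Real.cos θ : ℝ):ℂ)) = ∑' z : ℕ × ℕ, hterm R θ z := by
  have key : ∀ E : ℂ, Complex.exp (cw R * E) = ∑' n : ℕ, (cw R * E) ^ n / (n.factorial:ℂ) := by
    intro E; rw [Complex.exp_eq_exp_ℂ, NormedSpace.exp_eq_tsum_div]
  have harg : Complex.I * ((R * Real.cos θ : ℝ):ℂ)
      = cw R * Complex.exp ((θ:ℂ) * Complex.I) + cw R * Complex.exp (-(θ:ℂ) * Complex.I) := by
    rw [Complex.ofReal_mul, Complex.ofReal_cos, Complex.cos, cw]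
    ring
  have hE1 : ‖Complex.exp ((θ:ℂ) * Complex.I)‖ = 1 := norm_exp_pure_imag _ (by simp)
  have hE2 : ‖Complex.exp (-(θ:ℂ) * Complex.I)‖ = 1 := norm_exp_pure_imag _ (by simp)
  rw [harg, Complex.exp_add, key, key,
    tsum_mul_tsum_of_summable_norm (summable_norm_factor R _ hE1) (summable_norm_factor R _ hE2)]
  apply tsum_congr
  intro z
  rw [hterm, mul_pow, mul_pow, ← Complex.exp_nat_mul, ← Complex.exp_nat_mul,
    show (z.1:ℂ) * ((θ:ℂ)*Complex.I) = Complex.I * z.1 * θ by ring,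
    show (z.2:ℂ) * (-(θ:ℂ)*Complex.I) = -(Complex.I * z.2 * θ) by ring]
  ring

open Complex in
lemma sum_lattice_exp (L : ℕ) (hL : 1 ≤ L) (N : ℤ) :
    ∑ m ∈ Lambda1 L, Complex.exp ((2*Real.pi*Complex.I*N/L) * (m:ℂ))
      = if (L:ℤ) ∣ N then (L:ℂ) else 0 := by
  have hLne : ((L:ℂ)) ≠ 0 := Nat.cast_ne_zero.mpr (by omega)
  have h2piI : (2*(Real.pi:ℂ)*Complex.I) ≠ 0 := by
    simp [Real.pi_ne_zero, Complex.I_ne_zero, Complex.ofReal_ne_zero]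
  set c : ℂ := 2*Real.pi*Complex.I*N/L with hc
  have hexp : ∀ m : ℤ, Complex.exp (c * (m:ℂ)) = Complex.exp c ^ m := by
    intro m
    rw [show c * (m:ℂ) = (m:ℂ) * c by ring, Complex.exp_int_mul]
  have hecL : Complex.exp c ^ (L:ℕ) = 1 := by
    rw [← Complex.exp_nat_mul, show (L:ℂ) * c = (N:ℂ) * (2*Real.pi*Complex.I) by
      rw [hc]; field_simp]
    exact Complex.exp_int_mul_two_pi_mul_I N
  by_cases hdvd : (L:ℤ) ∣ N
  · rw [if_pos hdvd]
    obtain ⟨k, hk⟩ := hdvd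
    have hc1 : Complex.exp c = 1 := by
      rw [hc, show (2*(Real.pi:ℂ)*Complex.I*N/L) = (k:ℂ) * (2*Real.pi*Complex.I) by
        rw [hk]; push_cast; field_simp]
      exact Complex.exp_int_mul_two_pi_mul_I k
    have : ∀ m ∈ Lambda1 L, Complex.exp (c * (m:ℂ)) = 1 := by
      intro m _; rw [hexp m, hc1, one_zpow]
    rw [Finset.sum_congr rfl this, Finset.sum_const, card_lambda1]
    simp
  · rw [if_neg hdvd]
    have hζne : Complex.exp c ≠ 1 := by
      intro h1
      apply hdvd
      rw [Complex.exp_eq_one_iff] at h1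
      obtain ⟨k, hk⟩ := h1
      have h2 : (N:ℂ) * (2*Real.pi*Complex.I) = ((L:ℤ)*k : ℤ) * (2*Real.pi*Complex.I) := by
        have h3 : c * L = (k:ℂ) * (2*Real.pi*Complex.I) * L := by rw [hk]
        rw [hc] at h3
        field_simp at h3
        push_cast
        rw [show (N:ℂ) * (2*Real.pi*Complex.I) = 2*Real.pi*Complex.I*N by ring, h3]
        ring
      have h4 : (N:ℂ) = ((L:ℤ)*k : ℤ) := mul_right_cancel₀ h2piI h2
      exact ⟨k, by exact_mod_cast h4⟩
    have hζ0 : Complex.exp c ≠ 0 := Complex.exp_ne_zero c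
    set lo : ℤ := (L:ℤ)/2 - L + 1 with hlo
    have himg : Lambda1 L = Finset.image (fun i : ℕ => lo + i) (Finset.range L) := by
      rw [lambda1_eq]
      ext m
      simp only [Finset.mem_Icc, Finset.mem_image, Finset.mem_range]
      constructor
      · intro h
        exact ⟨(m - lo).toNat, by omega, by omega⟩
      · rintro ⟨i, hi2, rfl⟩
        omega
    rw [himg, Finset.sum_image (by intro i _ j _ h; have h' : lo + (i:ℤ) = lo + j := h; omega)]
    have hterm : ∀ i : ℕ, Complex.exp (c * ((lo + i : ℤ):ℂ))
        = Complex.exp c ^ (lo : ℤ) * Complex.exp c ^ (i : ℕ) := by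
      intro i
      rw [hexp, zpow_add₀ hζ0, zpow_natCast]
    rw [Finset.sum_congr rfl (fun i _ => hterm i), ← Finset.mul_sum, geom_sum_eq hζne, hecL]
    simp

open Complex in
lemma integral_exp_int (N : ℤ) :
    (∫ k in (-(1:ℝ)/2)..(1/2), Complex.exp ((2*Real.pi*Complex.I*N) * (k:ℂ))) =
      if N = 0 then 1 else 0 := by
  by_cases hN : N = 0
  · rw [if_pos hN, hN]
    simp only [Int.cast_zero, mul_zero, zero_mul, Complex.exp_zero]
    rw [intervalIntegral.integral_const]
    norm_num
  · rw [if_neg hN]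
    have hc : (2*Real.pi*Complex.I*(N:ℂ)) ≠ 0 := by
      simp [Real.pi_ne_zero, Complex.I_ne_zero, Complex.ofReal_ne_zero, hN]
    rw [integral_exp_mul_complex hc]
    have h1 : Complex.exp (2*Real.pi*Complex.I*(N:ℂ) * (((1:ℝ)/2 : ℝ):ℂ))
        = Complex.exp (2*Real.pi*Complex.I*(N:ℂ) * ((-(1:ℝ)/2 : ℝ):ℂ)) *
          Complex.exp ((N:ℂ) * (2*Real.pi*Complex.I)) := by
      rw [← Complex.exp_add]
      congr 1
      push_cast
      ring
    rw [h1, Complex.exp_int_mul_two_pi_mul_I, mul_one, sub_self, zero_div]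

lemma norm_coefQI (R u : ℝ) (z : ℕ × ℕ) :
    ‖coefQI R u z‖ = (|R|/2) ^ (z.1 + z.2) / ((z.1.factorial : ℝ) * (z.2.factorial : ℝ)) := by
  rw [coefQI, norm_mul, norm_div, norm_pow, norm_cw, norm_mul,
    norm_exp_pure_imag _ (by simp), mul_one, Complex.norm_natCast, Complex.norm_natCast]

lemma coefQI_norm_eq_nbd (R u : ℝ) (z : ℕ × ℕ) : ‖coefQI R u z‖ = nbd (|R|/2) z := by
  rw [norm_coefQI, nbd, pow_add]
  ring

open Complex in
lemma qc_eq (L : ℕ) (hL : 1 ≤ L) (x : ℤ) (R u : ℝ) (z : ℕ × ℕ) :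
    ((L:ℂ))⁻¹ * ∑ m ∈ Lambda1 L,
        Complex.exp (2*Real.pi*Complex.I*(((m:ℝ)/(L:ℝ)*(x:ℝ) : ℝ):ℂ)) *
          hterm R (2*Real.pi*((m:ℝ)/(L:ℝ)+u)) z
      = coefQI R u z * (if (L:ℤ) ∣ (x + z.1 - z.2) then 1 else 0) := by
  have hLR : ((L:ℝ)) ≠ 0 := Nat.cast_ne_zero.mpr (by omega)
  have key : ∀ m : ℤ,
      Complex.exp (2*Real.pi*Complex.I*(((m:ℝ)/(L:ℝ)*(x:ℝ) : ℝ):ℂ)) *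
        hterm R (2*Real.pi*((m:ℝ)/(L:ℝ)+u)) z
      = coefQI R u z * Complex.exp ((2*Real.pi*Complex.I*((x + z.1 - z.2 : ℤ):ℂ)/L) * (m:ℂ)) := by
    intro m
    rw [hterm, coefQI]
    set θ : ℝ := 2*Real.pi*((m:ℝ)/(L:ℝ)+u) with hθ
    have h1 : Complex.exp (2*Real.pi*Complex.I*(((m:ℝ)/(L:ℝ)*(x:ℝ) : ℝ):ℂ)) *
        ((cw R ^ z.1 / (z.1.factorial:ℂ) * Complex.exp (Complex.I * z.1 * θ)) *
         (cw R ^ z.2 / (z.2.factorial:ℂ) * Complex.exp (-(Complex.I * z.2 * θ))))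
        = (cw R ^ z.1 / (z.1.factorial:ℂ) * (cw R ^ z.2 / (z.2.factorial:ℂ))) *
          Complex.exp (2*Real.pi*Complex.I*(((m:ℝ)/(L:ℝ)*(x:ℝ) : ℝ):ℂ) +
            (Complex.I * z.1 * θ + -(Complex.I * z.2 * θ))) := by
      rw [Complex.exp_add, Complex.exp_add]
      ring
    rw [h1]
    have h2 : 2*Real.pi*Complex.I*(((m:ℝ)/(L:ℝ)*(x:ℝ) : ℝ):ℂ) +
          (Complex.I * z.1 * θ + -(Complex.I * z.2 * θ))
        = Complex.I * ((z.1:ℂ) - (z.2:ℂ)) * (2*Real.pi*u) +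
          (2*Real.pi*Complex.I*((x + z.1 - z.2 : ℤ):ℂ)/L) * (m:ℂ) := by
      rw [hθ]
      push_cast
      field_simp
      ring
    rw [h2, Complex.exp_add, pow_add]
    field_simp
  rw [Finset.sum_congr rfl (fun m _ => key m), ← Finset.mul_sum,
    sum_lattice_exp L hL (x + z.1 - z.2)]
  have hLC : ((L:ℂ)) ≠ 0 := Nat.cast_ne_zero.mpr (by omega)
  split_ifs with h
  · rw [mul_one]
    field_simp
  · simp

open Complex in
lemma ic_eq (x : ℤ) (R u : ℝ) (z : ℕ × ℕ) :
    (∫ k in (-(1:ℝ)/2)..(1/2),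
        Complex.exp (2*Real.pi*Complex.I*((k*(x:ℝ) : ℝ):ℂ)) * hterm R (2*Real.pi*(k+u)) z)
      = coefQI R u z * (if (x + (z.1:ℤ) - z.2) = 0 then 1 else 0) := by
  have key : ∀ k : ℝ,
      Complex.exp (2*Real.pi*Complex.I*((k*(x:ℝ) : ℝ):ℂ)) * hterm R (2*Real.pi*(k+u)) z
      = coefQI R u z * Complex.exp ((2*Real.pi*Complex.I*((x + z.1 - z.2 : ℤ):ℂ)) * (k:ℂ)) := by
    intro k
    rw [hterm, coefQI]
    set θ : ℝ := 2*Real.pi*(k+u) with hθ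
    have h1 : Complex.exp (2*Real.pi*Complex.I*((k*(x:ℝ) : ℝ):ℂ)) *
        ((cw R ^ z.1 / (z.1.factorial:ℂ) * Complex.exp (Complex.I * z.1 * θ)) *
         (cw R ^ z.2 / (z.2.factorial:ℂ) * Complex.exp (-(Complex.I * z.2 * θ))))
        = (cw R ^ z.1 / (z.1.factorial:ℂ) * (cw R ^ z.2 / (z.2.factorial:ℂ))) *
          Complex.exp (2*Real.pi*Complex.I*((k*(x:ℝ) : ℝ):ℂ) +
            (Complex.I * z.1 * θ + -(Complex.I * z.2 * θ))) := by
      rw [Complex.exp_add, Complex.exp_add]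
      ring
    rw [h1]
    have h2 : 2*Real.pi*Complex.I*((k*(x:ℝ) : ℝ):ℂ) +
          (Complex.I * z.1 * θ + -(Complex.I * z.2 * θ))
        = Complex.I * ((z.1:ℂ) - (z.2:ℂ)) * (2*Real.pi*u) +
          (2*Real.pi*Complex.I*((x + z.1 - z.2 : ℤ):ℂ)) * (k:ℂ) := by
      rw [hθ]
      push_cast
      ring
    rw [h2, Complex.exp_add, pow_add]
    ring
  rw [intervalIntegral.integral_congr (g := fun k =>
      coefQI R u z * Complex.exp ((2*Real.pi*Complex.I*((x + z.1 - z.2 : ℤ):ℂ)) * (k:ℂ)))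
      (fun k _ => key k),
    intervalIntegral.integral_const_mul, integral_exp_int]

open Complex in
lemma Q1_eq (L : ℕ) (hL : 1 ≤ L) (x : ℤ) (R u : ℝ) :
    Q1 L x R u = ∑' z : ℕ × ℕ, coefQI R u z * (if (L:ℤ) ∣ (x + z.1 - z.2) then 1 else 0) := by
  rw [Q1]
  have hsplit : ∀ m : ℤ,
      Complex.exp (2*Real.pi*Complex.I*(((m:ℝ)/(L:ℝ)*(x:ℝ) : ℝ):ℂ) +
        Complex.I*((R*Real.cos (2*Real.pi*((m:ℝ)/(L:ℝ)+u)) : ℝ):ℂ))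
      = ∑' z : ℕ × ℕ, Complex.exp (2*Real.pi*Complex.I*(((m:ℝ)/(L:ℝ)*(x:ℝ) : ℝ):ℂ)) *
          hterm R (2*Real.pi*((m:ℝ)/(L:ℝ)+u)) z := by
    intro m
    rw [Complex.exp_add, gexp_eq, ← tsum_mul_left]
  rw [Finset.sum_congr rfl (fun m _ => hsplit m),
    ← Summable.tsum_finsetSum (fun m _ => ((summable_hterm R _).mul_left _)),
    ← tsum_mul_left]
  exact tsum_congr (fun z => qc_eq L hL x R u z)

lemma norm_phase_hterm (R θ v : ℝ) (z : ℕ × ℕ) :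
    ‖Complex.exp (2*Real.pi*Complex.I*(v:ℂ)) * hterm R θ z‖ = nbd (|R|/2) z := by
  rw [norm_mul, norm_exp_pure_imag _ (re_arg0 v), one_mul, norm_hterm]

open Complex in
lemma I1_eq (x : ℤ) (R u : ℝ) :
    I1 x R u = ∑' z : ℕ × ℕ, coefQI R u z * (if (x + (z.1:ℤ) - z.2) = 0 then 1 else 0) := by
  have hle : ((-(1:ℝ)/2) : ℝ) ≤ 1/2 := by norm_num
  have hG : ∀ k : ℝ, Complex.exp (2*Real.pi*Complex.I*((k*(x:ℝ) : ℝ):ℂ) +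
        Complex.I*((R*Real.cos (2*Real.pi*(k+u)) : ℝ):ℂ))
      = ∑' z : ℕ × ℕ, Complex.exp (2*Real.pi*Complex.I*((k*(x:ℝ) : ℝ):ℂ)) *
          hterm R (2*Real.pi*(k+u)) z := by
    intro k; rw [Complex.exp_add, gexp_eq, ← tsum_mul_left]
  have hmeas : ∀ z : ℕ × ℕ, AEStronglyMeasurable
      (fun k : ℝ => Complex.exp (2*Real.pi*Complex.I*((k*(x:ℝ) : ℝ):ℂ)) *
        hterm R (2*Real.pi*(k+u)) z)
      (MeasureTheory.volume.restrict (Set.Ioc (-(1:ℝ)/2) (1/2))) := by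
    intro z
    apply Continuous.aestronglyMeasurable
    unfold hterm
    fun_prop
  have hint : ∀ z : ℕ × ℕ, (∫⁻ k, ‖Complex.exp (2*Real.pi*Complex.I*((k*(x:ℝ) : ℝ):ℂ)) *
        hterm R (2*Real.pi*(k+u)) z‖₊
        ∂(MeasureTheory.volume.restrict (Set.Ioc (-(1:ℝ)/2) (1/2))))
      = ENNReal.ofReal (nbd (|R|/2) z) := by
    intro z
    have h1 : ∀ k : ℝ, (‖Complex.exp (2*Real.pi*Complex.I*((k*(x:ℝ) : ℝ):ℂ)) *
        hterm R (2*Real.pi*(k+u)) z‖₊ : ENNReal) = ENNReal.ofReal (nbd (|R|/2) z) := by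
      intro k
      rw [← enorm_eq_nnnorm, ← ofReal_norm, norm_phase_hterm]
    rw [lintegral_congr (fun k => h1 k), MeasureTheory.lintegral_const,
      MeasureTheory.Measure.restrict_apply_univ, Real.volume_Ioc]
    norm_num
  have hbound : (∑' z : ℕ × ℕ, ∫⁻ k, ‖Complex.exp (2*Real.pi*Complex.I*((k*(x:ℝ) : ℝ):ℂ)) *
        hterm R (2*Real.pi*(k+u)) z‖₊
        ∂(MeasureTheory.volume.restrict (Set.Ioc (-(1:ℝ)/2) (1/2)))) ≠ ⊤ := by
    rw [tsum_congr hint,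
      ← ENNReal.ofReal_tsum_of_nonneg (nbd_nonneg _ (by positivity)) (summable_nbd _)]
    exact ENNReal.ofReal_ne_top
  rw [I1, intervalIntegral.integral_congr (fun k _ => hG k),
    intervalIntegral.integral_of_le hle, MeasureTheory.integral_tsum hmeas hbound]
  apply tsum_congr
  intro z
  rw [← intervalIntegral.integral_of_le hle]
  exact ic_eq x R u z

lemma fbd_nonneg (L : ℕ) (x : ℤ) {t : ℝ} (ht : 0 ≤ t) (z : ℕ × ℕ) : 0 ≤ fbd L x t z := by
  rw [fbd]
  split_ifs
  · positivity
  · exact le_refl 0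

lemma fbd_le_nbd (L : ℕ) (x : ℤ) {t : ℝ} (ht : 0 ≤ t) (z : ℕ × ℕ) : fbd L x t z ≤ nbd t z := by
  rw [fbd, nbd]
  split_ifs
  · rw [pow_add]
    apply le_of_eq
    ring
  · positivity

lemma summable_fbd (L : ℕ) (x : ℤ) {t : ℝ} (ht : 0 ≤ t) : Summable (fbd L x t) :=
  Summable.of_nonneg_of_le (fbd_nonneg L x ht) (fbd_le_nbd L x ht) (summable_nbd t)

lemma normQI_le (L : ℕ) (hL : 1 ≤ L) (x : ℤ) (R u : ℝ) :
    ‖Q1 L x R u - I1 x R u‖ ≤ ∑' z : ℕ × ℕ, fbd L x (|R|/2) z := by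
  have hR2 : (0:ℝ) ≤ |R|/2 := by positivity
  have hbd1 : ∀ z : ℕ × ℕ,
      ‖coefQI R u z * (if (L:ℤ) ∣ (x + z.1 - z.2) then (1:ℂ) else 0)‖ ≤ nbd (|R|/2) z := by
    intro z
    rw [norm_mul, coefQI_norm_eq_nbd]
    split_ifs <;> simp [nbd_nonneg _ hR2 z]
  have hbd2 : ∀ z : ℕ × ℕ,
      ‖coefQI R u z * (if (x + (z.1:ℤ) - z.2) = 0 then (1:ℂ) else 0)‖ ≤ nbd (|R|/2) z := by
    intro z
    rw [norm_mul, coefQI_norm_eq_nbd]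
    split_ifs <;> simp [nbd_nonneg _ hR2 z]
  have hsq1 : Summable (fun z : ℕ × ℕ =>
      coefQI R u z * (if (L:ℤ) ∣ (x + z.1 - z.2) then (1:ℂ) else 0)) :=
    Summable.of_norm_bounded (summable_nbd _) hbd1
  have hsq2 : Summable (fun z : ℕ × ℕ =>
      coefQI R u z * (if (x + (z.1:ℤ) - z.2) = 0 then (1:ℂ) else 0)) :=
    Summable.of_norm_bounded (summable_nbd _) hbd2
  have heq : ∀ z : ℕ × ℕ,
      ‖coefQI R u z * (if (L:ℤ) ∣ (x + z.1 - z.2) then (1:ℂ) else 0) -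
        coefQI R u z * (if (x + (z.1:ℤ) - z.2) = 0 then (1:ℂ) else 0)‖ = fbd L x (|R|/2) z := by
    intro z
    rw [← mul_sub, norm_mul, coefQI_norm_eq_nbd, fbd]
    by_cases h1 : (L:ℤ) ∣ (x + z.1 - z.2) <;> by_cases h2 : (x + (z.1:ℤ) - z.2) = 0
    · rw [if_pos h1, if_pos h2, if_neg (by tauto)]
      simp
    · rw [if_pos h1, if_neg h2, if_pos ⟨h1, h2⟩, nbd, pow_add]
      simp only [sub_zero, norm_one, mul_one]
      ring
    · exact absurd (h2 ▸ dvd_zero (L:ℤ)) h1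
    · rw [if_neg h1, if_neg h2, if_neg (by tauto)]
      simp
  have hs : Summable (fun z : ℕ × ℕ =>
      ‖coefQI R u z * (if (L:ℤ) ∣ (x + z.1 - z.2) then (1:ℂ) else 0) -
        coefQI R u z * (if (x + (z.1:ℤ) - z.2) = 0 then (1:ℂ) else 0)‖) :=
    (summable_fbd L x hR2).congr (fun z => (heq z).symm)
  rw [Q1_eq L hL x R u, I1_eq x R u, ← Summable.tsum_sub hsq1 hsq2]
  calc ‖∑' z : ℕ × ℕ, (coefQI R u z * (if (L:ℤ) ∣ (x + z.1 - z.2) then (1:ℂ) else 0) -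
        coefQI R u z * (if (x + (z.1:ℤ) - z.2) = 0 then (1:ℂ) else 0))‖
      ≤ ∑' z : ℕ × ℕ, ‖coefQI R u z * (if (L:ℤ) ∣ (x + z.1 - z.2) then (1:ℂ) else 0) -
        coefQI R u z * (if (x + (z.1:ℤ) - z.2) = 0 then (1:ℂ) else 0)‖ :=
        norm_tsum_le_tsum_norm hs
    _ = ∑' z : ℕ × ℕ, fbd L x (|R|/2) z := tsum_congr heq

/-! ### tail estimates -/

lemma fact_mul_pow_le (D c : ℕ) (hD : 1 ≤ D) : D.factorial * D ^ c ≤ (c + D).factorial := by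
  induction c with
  | zero => simp
  | succ c ih =>
      have h1 : D.factorial * D ^ (c+1) = (D.factorial * D ^ c) * D := by ring
      have h2 : (c + 1 + D).factorial = (c + D + 1) * (c + D).factorial := by
        rw [show c + 1 + D = (c + D) + 1 by ring, Nat.factorial_succ]
      rw [h1, h2]
      calc D.factorial * D ^ c * D ≤ (c + D).factorial * D := by
            exact Nat.mul_le_mul_right D ih
        _ ≤ (c + D).factorial * (c + D + 1) := by
            exact Nat.mul_le_mul_left _ (by omega)
        _ = (c + D + 1) * (c + D).factorial := by ring

lemma pow_div_fact_le_exp (D : ℕ) : (D:ℝ) ^ D / (D.factorial : ℝ) ≤ Real.exp D := by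
  have h := Real.exp_eq_exp_ℝ ▸ (NormedSpace.exp_eq_tsum_div (𝔸 := ℝ))
  have hexp : Real.exp (D:ℝ) = ∑' n : ℕ, (D:ℝ)^n / n.factorial := by
    rw [Real.exp_eq_exp_ℝ, NormedSpace.exp_eq_tsum_div]
  rw [hexp]
  exact Summable.le_tsum (Real.summable_pow_div_factorial (D:ℝ)) D
    (fun m _ => by positivity)

lemma exp_seventeen_sixteenth : Real.exp (17/16 : ℝ) ≤ 3 := by
  have h1 : Real.exp (17/16 : ℝ) = Real.exp 1 * Real.exp (1/16 : ℝ) := by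
    rw [← Real.exp_add]; norm_num
  have h2 : Real.exp (1/16 : ℝ) ≤ 16/15 := by
    have h3 : (1:ℝ) + (-(1/16)) ≤ Real.exp (-(1/16)) := by
      have := Real.add_one_le_exp (-(1/16) : ℝ); linarith
    have h4 : (0:ℝ) < 15/16 := by norm_num
    have h5 : (15/16 : ℝ) ≤ Real.exp (-(1/16)) := by linarith
    rw [Real.exp_neg] at h5
    have h6 : (0:ℝ) < Real.exp (1/16 : ℝ) := Real.exp_pos _
    rw [le_inv_comm₀ h4 h6] at h5
    linarith
  have h7 : Real.exp 1 < 2.7182818286 := Real.exp_one_lt_d9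
  have h8 : (0:ℝ) < Real.exp (1/16:ℝ) := Real.exp_pos _
  rw [h1]
  nlinarith

lemma term_le_aux (D : ℕ) (hD : 1 ≤ D) (t : ℝ) (ht : 0 ≤ t) (c : ℕ) :
    t ^ (2*c + D) / ((c.factorial : ℝ) * ((c + D).factorial : ℝ))
      ≤ t ^ D / (D.factorial : ℝ) * ((t^2/D)^c / (c.factorial : ℝ)) := by
  have hD0 : (0:ℝ) < D := by exact_mod_cast hD
  have hnat : D.factorial * D ^ c * c.factorial ≤ c.factorial * (c + D).factorial := by
    calc D.factorial * D ^ c * c.factorial = c.factorial * (D.factorial * D ^ c) := by ring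
      _ ≤ c.factorial * (c + D).factorial :=
          Nat.mul_le_mul_left _ (fact_mul_pow_le D c hD)
  have hcast : ((D.factorial : ℝ) * (D:ℝ) ^ c * (c.factorial : ℝ))
      ≤ (c.factorial : ℝ) * ((c + D).factorial : ℝ) := by exact_mod_cast hnat
  have hpos1 : (0:ℝ) < (D.factorial : ℝ) * (D:ℝ) ^ c * (c.factorial : ℝ) := by positivity
  have h1 : t ^ (2*c + D) / ((c.factorial : ℝ) * ((c + D).factorial : ℝ))
      ≤ t ^ (2*c + D) / ((D.factorial : ℝ) * (D:ℝ) ^ c * (c.factorial : ℝ)) := by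
    apply div_le_div_of_nonneg_left (by positivity) hpos1 hcast
  refine h1.trans_eq ?_
  rw [div_pow, pow_add, pow_mul]
  have hfD : (D.factorial : ℝ) ≠ 0 := by positivity
  have hfc : (c.factorial : ℝ) ≠ 0 := by positivity
  have hDne : (D:ℝ) ≠ 0 := ne_of_gt hD0
  field_simp

lemma key_bound (D : ℕ) (hD : 1 ≤ D) (t : ℝ) (ht : 0 ≤ t) (htD : 4 * t ≤ D) :
    t ^ D / (D.factorial : ℝ) * Real.exp (t^2 / D) ≤ (3/4 : ℝ) ^ D := by
  have hD0 : (0:ℝ) < D := by exact_mod_cast hD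
  have hfac : (0:ℝ) < (D.factorial : ℝ) := by exact_mod_cast D.factorial_pos
  have hexp1 : Real.exp (t^2 / D) ≤ Real.exp ((D:ℝ)/16) := by
    apply Real.exp_le_exp.mpr
    rw [div_le_div_iff₀ hD0 (by norm_num : (0:ℝ) < 16)]
    nlinarith
  have h1 : t ^ D ≤ ((D:ℝ)/4) ^ D := pow_le_pow_left₀ ht (by linarith) D
  have hB : (D:ℝ)^D / (D.factorial : ℝ) ≤ Real.exp D := pow_div_fact_le_exp D
  have hC : Real.exp (17/16:ℝ) ^ D ≤ (3:ℝ)^D :=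
    pow_le_pow_left₀ (Real.exp_pos _).le exp_seventeen_sixteenth D
  have hstep : Real.exp (D:ℝ) * Real.exp ((D:ℝ)/16) = Real.exp (17/16:ℝ) ^ D := by
    rw [← Real.exp_add, ← Real.exp_nat_mul]
    congr 1
    ring
  calc t ^ D / (D.factorial : ℝ) * Real.exp (t^2 / D)
      ≤ ((D:ℝ)/4) ^ D / (D.factorial : ℝ) * Real.exp ((D:ℝ)/16) := by
        apply mul_le_mul _ hexp1 (Real.exp_pos _).le (by positivity)
        exact div_le_div_of_nonneg_right h1 hfac.le |>.trans_eq rfl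
    _ = ((D:ℝ)^D / (D.factorial : ℝ)) * Real.exp ((D:ℝ)/16) * ((1:ℝ)/4)^D := by
        rw [div_pow, div_pow, one_pow]
        ring
    _ ≤ Real.exp (D:ℝ) * Real.exp ((D:ℝ)/16) * ((1:ℝ)/4)^D := by
        have h4 : (0:ℝ) ≤ ((1:ℝ)/4)^D := by positivity
        have h5 : (0:ℝ) ≤ Real.exp ((D:ℝ)/16) := (Real.exp_pos _).le
        apply mul_le_mul_of_nonneg_right _ h4
        exact mul_le_mul_of_nonneg_right hB h5
    _ = Real.exp (17/16:ℝ) ^ D * ((1:ℝ)/4)^D := by rw [hstep]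
    _ ≤ (3:ℝ)^D * ((1:ℝ)/4)^D := by
        apply mul_le_mul_of_nonneg_right hC (by positivity)
    _ = (3/4 : ℝ) ^ D := by rw [← mul_pow]; norm_num

lemma summable_inner (D : ℕ) (hD : 1 ≤ D) (t : ℝ) (ht : 0 ≤ t) :
    Summable (fun c : ℕ => t ^ (2*c + D) / ((c.factorial : ℝ) * ((c + D).factorial : ℝ))) := by
  exact Summable.of_nonneg_of_le (fun c => by positivity) (term_le_aux D hD t ht)
    ((Real.summable_pow_div_factorial (t^2/D)).mul_left _)

lemma inner_sum_le (D : ℕ) (hD : 1 ≤ D) (t : ℝ) (ht : 0 ≤ t) (htD : 4 * t ≤ D) :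
    ∑' c : ℕ, t ^ (2*c + D) / ((c.factorial : ℝ) * ((c + D).factorial : ℝ)) ≤ (3/4 : ℝ) ^ D := by
  have hsum2 : Summable (fun c : ℕ => t ^ D / (D.factorial : ℝ) * ((t^2/D)^c / (c.factorial : ℝ))) :=
    (Real.summable_pow_div_factorial (t^2/D)).mul_left _
  calc ∑' c : ℕ, t ^ (2*c + D) / ((c.factorial : ℝ) * ((c + D).factorial : ℝ))
      ≤ ∑' c : ℕ, t ^ D / (D.factorial : ℝ) * ((t^2/D)^c / (c.factorial : ℝ)) :=
        Summable.tsum_le_tsum (term_le_aux D hD t ht) (summable_inner D hD t ht) hsum2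
    _ = t ^ D / (D.factorial : ℝ) * ∑' c : ℕ, (t^2/D)^c / (c.factorial : ℝ) := tsum_mul_left
    _ = t ^ D / (D.factorial : ℝ) * Real.exp (t^2/D) := by
        congr 1
        rw [Real.exp_eq_exp_ℝ, NormedSpace.exp_eq_tsum_div]
    _ ≤ (3/4 : ℝ) ^ D := key_bound D hD t ht htD

/-- `D` function: `|nL - x|` -/
def Dfun (L : ℕ) (x : ℤ) (n : ℤ) : ℕ := (n * L - x).natAbs

/-- injection from pairs to (frequency, min) data -/
def efun (L : ℕ) (x : ℤ) (z : ℕ × ℕ) : ℤ × ℕ :=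
  if ((L:ℤ) ∣ (x + z.1 - z.2)) ∧ (x + (z.1:ℤ) - z.2) ≠ 0
  then ((x + z.1 - z.2) / L, min z.1 z.2)
  else (0, Nat.pair z.1 z.2)

/-- regrouped bound function -/
def gfun (L : ℕ) (x : ℤ) (t : ℝ) (p : ℤ × ℕ) : ℝ :=
  if p.1 = 0 then 0
  else t ^ (2*p.2 + Dfun L x p.1) /
    ((p.2.factorial : ℝ) * ((p.2 + Dfun L x p.1).factorial : ℝ))

lemma gfun_nonneg (L : ℕ) (x : ℤ) {t : ℝ} (ht : 0 ≤ t) (p : ℤ × ℕ) : 0 ≤ gfun L x t p := by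
  rw [gfun]
  split_ifs
  · exact le_refl 0
  · positivity

lemma g_le_aux (t : ℝ) (ht : 0 ≤ t) (D c : ℕ) (hwk : t ^ D / (D.factorial : ℝ) ≤ (3/4:ℝ)^D) :
    t ^ (2*c + D) / ((c.factorial : ℝ) * ((c + D).factorial : ℝ))
      ≤ (3/4:ℝ)^D * ((t^2)^c / (c.factorial : ℝ)) := by
  have h1 : t ^ (2*c + D) = (t^2)^c * t^D := by rw [pow_add, pow_mul]
  have h2 : (D.factorial : ℝ) ≤ ((c+D).factorial : ℝ) := by
    exact_mod_cast Nat.factorial_le (Nat.le_add_left D c)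
  have h3 : (0:ℝ) < (c.factorial : ℝ) * (D.factorial : ℝ) := by positivity
  have h4 : (c.factorial : ℝ) * (D.factorial : ℝ) ≤ (c.factorial : ℝ) * ((c+D).factorial : ℝ) :=
    mul_le_mul_of_nonneg_left h2 (by positivity)
  calc t ^ (2*c + D) / ((c.factorial : ℝ) * ((c + D).factorial : ℝ))
      ≤ t ^ (2*c + D) / ((c.factorial : ℝ) * (D.factorial : ℝ)) :=
        div_le_div_of_nonneg_left (by positivity) h3 h4
    _ = ((t^2)^c / (c.factorial : ℝ)) * (t ^ D / (D.factorial : ℝ)) := by rw [h1]; ring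
    _ ≤ ((t^2)^c / (c.factorial : ℝ)) * (3/4:ℝ)^D :=
        mul_le_mul_of_nonneg_left hwk (by positivity)
    _ = (3/4:ℝ)^D * ((t^2)^c / (c.factorial : ℝ)) := by ring

lemma summable_int_geom {r : ℝ} (h0 : 0 ≤ r) (h1 : r < 1) :
    Summable (fun n : ℤ => r ^ n.natAbs) := by
  apply Summable.of_nat_of_neg_add_one
  · exact (summable_geometric_of_lt_one h0 h1).congr (fun k => by simp)
  · have h2 : Summable (fun k : ℕ => r ^ k * r) := (summable_geometric_of_lt_one h0 h1).mul_right r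
    apply h2.congr
    intro k
    have : ((-(k+1) : ℤ)).natAbs = k + 1 := by omega
    rw [this, pow_succ]

lemma tsum_M_le {r : ℝ} (h0 : 0 ≤ r) (h1 : r ≤ 3/4) :
    ∑' n : ℤ, (if n = 0 then (0:ℝ) else r ^ n.natAbs) ≤ 8 * r := by
  have hlt : r < 1 := lt_of_le_of_lt h1 (by norm_num)
  have hgeo : Summable (fun k : ℕ => r ^ k) := summable_geometric_of_lt_one h0 hlt
  have hs1 : Summable (fun k : ℕ => r ^ (k+1)) :=
    (hgeo.mul_right r).congr (fun k => by rw [pow_succ])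
  have hA : Summable (fun k : ℕ => if ((k:ℤ)) = 0 then (0:ℝ) else r ^ ((k:ℤ)).natAbs) := by
    refine Summable.of_nonneg_of_le (fun k => ?_) (fun k => ?_) hgeo
    · split_ifs
      · exact le_refl 0
      · positivity
    · split_ifs
      · positivity
      · simp
  have hB : Summable (fun k : ℕ => if ((-(k+1) : ℤ)) = 0 then (0:ℝ)
      else r ^ ((-(k+1) : ℤ)).natAbs) := by
    apply hs1.congr
    intro k
    rw [if_neg (by omega), show ((-(k+1) : ℤ)).natAbs = k + 1 by omega]
  rw [tsum_of_nat_of_neg_add_one (f := fun n : ℤ => if n = 0 then (0:ℝ) else r ^ n.natAbs) hA hB]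
  have hAval : ∑' k : ℕ, (if ((k:ℤ)) = 0 then (0:ℝ) else r ^ ((k:ℤ)).natAbs)
      = ∑' k : ℕ, r ^ (k+1) := by
    rw [Summable.tsum_eq_zero_add hA]
    have h00 : (if (((0:ℕ):ℤ)) = 0 then (0:ℝ) else r ^ (((0:ℕ):ℤ)).natAbs) = 0 := by norm_num
    rw [h00, zero_add]
    apply tsum_congr
    intro k
    have hne : ((((k+1 : ℕ)):ℤ)) ≠ 0 := by exact_mod_cast Nat.succ_ne_zero k
    rw [if_neg hne, show ((((k+1 : ℕ)):ℤ)).natAbs = k + 1 by omega]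
  have hBval : ∑' k : ℕ, (if ((-(k+1) : ℤ)) = 0 then (0:ℝ) else r ^ ((-(k+1) : ℤ)).natAbs)
      = ∑' k : ℕ, r ^ (k+1) := by
    apply tsum_congr
    intro k
    rw [if_neg (by omega), show ((-(k+1) : ℤ)).natAbs = k + 1 by omega]
  have hgval : ∑' k : ℕ, r ^ (k+1) = r * (1 - r)⁻¹ := by
    have h2 : ∀ k : ℕ, r ^ (k+1) = r * r ^ k := fun k => by rw [pow_succ]; ring
    rw [tsum_congr h2, tsum_mul_left, tsum_geometric_of_lt_one h0 hlt]
  have hinv : (1 - r)⁻¹ ≤ 4 := by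
    have h2 : (1/4 : ℝ) ≤ 1 - r := by linarith
    have h3 : (0:ℝ) < 1/4 := by norm_num
    calc (1 - r)⁻¹ ≤ (1/4 : ℝ)⁻¹ := by
          apply inv_anti₀ h3 h2
      _ = 4 := by norm_num
  rw [hAval, hBval, hgval]
  nlinarith

set_option maxHeartbeats 1000000 in
lemma tail_bound (L : ℕ) (hL : 2 ≤ L) (x : ℤ) (hx : 2 * |x| ≤ (L:ℤ)) (t : ℝ) (ht : 0 ≤ t)
    (htL : 8 * t ≤ (L:ℝ)) :
    ∑' z : ℕ × ℕ, fbd L x t z ≤ 8 * (3/4 : ℝ) ^ (L/2) := by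
  classical
  set q : ℕ := L/2 with hq
  have hq1 : 1 ≤ q := by omega
  have hqn : 2*q ≤ L ∧ L ≤ 2*q+1 := by omega
  have hqc : 2*(q:ℤ) ≤ (L:ℤ) ∧ (L:ℤ) ≤ 2*(q:ℤ)+1 :=
    ⟨by exact_mod_cast hqn.1, by exact_mod_cast hqn.2⟩
  have hxq : |x| ≤ (q:ℤ) := by
    rcases abs_cases x with ⟨h1, _⟩ | ⟨h1, _⟩ <;> omega
  have hkey : ∀ n : ℤ, n ≠ 0 →
      ((L:ℤ) - q ≤ (Dfun L x n : ℤ) ∧ (n.natAbs : ℤ) * q ≤ (Dfun L x n : ℤ)) := by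
    intro n hn
    have c1 : (Dfun L x n : ℤ) = |n * L - x| := by
      rw [Dfun, Int.abs_eq_natAbs]
    have c2 : |n * (L:ℤ)| - |x| ≤ |n * L - x| := abs_sub_abs_le_abs_sub _ _
    have c2' : |n * (L:ℤ)| = |n| * L := by
      rw [abs_mul, abs_of_nonneg (show (0:ℤ) ≤ (L:ℤ) by positivity)]
    have c3 : (1:ℤ) ≤ |n| := Int.one_le_abs hn
    have c5 : (L:ℤ) ≤ |n| * L := le_mul_of_one_le_left (by positivity) c3
    have c6 : (L:ℤ) - q ≤ |n| * ((L:ℤ) - q) :=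
      le_mul_of_one_le_left (by omega) c3
    have c7 : |n| * ((L:ℤ) - q) = |n| * L - |n| * q := by ring
    have c8 : (n.natAbs : ℤ) = |n| := (Int.abs_eq_natAbs n).symm
    constructor
    · rw [c1]; rw [c2'] at c2; omega
    · rw [c1, c8]; rw [c2'] at c2; omega
  have hD1 : ∀ n : ℤ, n ≠ 0 → 1 ≤ Dfun L x n := by
    intro n hn
    have h := (hkey n hn).1
    omega
  have hDt : ∀ n : ℤ, n ≠ 0 → 4 * t ≤ (Dfun L x n : ℝ) := by
    intro n hn
    have h2 : ((L:ℤ) - q) ≤ (Dfun L x n : ℤ) := (hkey n hn).1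
    have h3 : ((L:ℝ) - (q:ℝ)) ≤ (Dfun L x n : ℝ) := by exact_mod_cast h2
    have h4 : 2*(q:ℝ) ≤ (L:ℝ) := by exact_mod_cast hqc.1
    linarith
  have hwk : ∀ n : ℤ, n ≠ 0 →
      t ^ (Dfun L x n) / ((Dfun L x n).factorial : ℝ) ≤ (3/4:ℝ)^(Dfun L x n) := by
    intro n hn
    have h := key_bound (Dfun L x n) (hD1 n hn) t ht (hDt n hn)
    have hexp1 : (1:ℝ) ≤ Real.exp (t^2 / (Dfun L x n)) := Real.one_le_exp (by positivity)
    have hnn : (0:ℝ) ≤ t ^ (Dfun L x n) / ((Dfun L x n).factorial : ℝ) := by positivity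
    nlinarith
  -- auxiliary facts about efun on good pairs
  have hn_ne : ∀ z : ℕ × ℕ, ((L:ℤ) ∣ (x + z.1 - z.2)) → (x + (z.1:ℤ) - z.2) ≠ 0 →
      ((x + (z.1:ℤ) - z.2) / L ≠ 0 ∧ ((x + (z.1:ℤ) - z.2) / L) * L = x + z.1 - z.2) := by
    intro z h1 h2
    have h3 := Int.ediv_mul_cancel h1
    refine ⟨?_, h3⟩
    intro h0
    rw [h0, zero_mul] at h3
    exact h2 h3.symm
  have heinj : Function.Injective (efun L x) := by
    intro z1 z2 hz
    rw [efun, efun] at hz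
    by_cases h1 : ((L:ℤ) ∣ (x + z1.1 - z1.2)) ∧ (x + (z1.1:ℤ) - z1.2) ≠ 0 <;>
      by_cases h2 : ((L:ℤ) ∣ (x + z2.1 - z2.2)) ∧ (x + (z2.1:ℤ) - z2.2) ≠ 0
    · rw [if_pos h1, if_pos h2] at hz
      obtain ⟨ha, hb⟩ := Prod.ext_iff.mp hz
      have e1 := (hn_ne z1 h1.1 h1.2).2
      have e2 := (hn_ne z2 h2.1 h2.2).2
      have hNeq : x + (z1.1:ℤ) - z1.2 = x + z2.1 - z2.2 := by
        rw [← e1, ← e2]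
        simp only at ha
        rw [ha]
      simp only at hb
      have hz12 : z1.1 = z2.1 ∧ z1.2 = z2.2 := by omega
      exact Prod.ext_iff.mpr ⟨hz12.1, hz12.2⟩
    · rw [if_pos h1, if_neg h2] at hz
      exfalso
      have hfst := (Prod.ext_iff.mp hz).1
      simp only at hfst
      exact (hn_ne z1 h1.1 h1.2).1 hfst
    · rw [if_neg h1, if_pos h2] at hz
      exfalso
      have hfst := (Prod.ext_iff.mp hz).1
      simp only at hfst
      exact (hn_ne z2 h2.1 h2.2).1 hfst.symm
    · rw [if_neg h1, if_neg h2] at hz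
      have hsnd := (Prod.ext_iff.mp hz).2
      simp only at hsnd
      have hp := Nat.pair_eq_pair.mp hsnd
      exact Prod.ext_iff.mpr ⟨hp.1, hp.2⟩
  have hpt : ∀ z : ℕ × ℕ, fbd L x t z ≤ gfun L x t (efun L x z) := by
    intro z
    rw [efun, fbd]
    by_cases h1 : ((L:ℤ) ∣ (x + z.1 - z.2)) ∧ (x + (z.1:ℤ) - z.2) ≠ 0
    · rw [if_pos h1, if_pos h1, gfun]
      have hne := (hn_ne z h1.1 h1.2).1
      have heq := (hn_ne z h1.1 h1.2).2
      simp only [if_neg hne]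
      have hDn : Dfun L x ((x + (z.1:ℤ) - z.2) / L) = ((z.1:ℤ) - z.2).natAbs := by
        rw [Dfun]
        congr 1
        omega
      rw [hDn]
      apply le_of_eq
      rcases le_total z.1 z.2 with hab | hab
      · have hmin : min z.1 z.2 = z.1 := min_eq_left hab
        have he1 : 2 * min z.1 z.2 + ((z.1:ℤ) - z.2).natAbs = z.1 + z.2 := by omega
        have he2 : min z.1 z.2 + ((z.1:ℤ) - z.2).natAbs = z.2 := by omega
        rw [he1, he2, hmin]
      · have hmin : min z.1 z.2 = z.2 := min_eq_right hab
        have he1 : 2 * min z.1 z.2 + ((z.1:ℤ) - z.2).natAbs = z.1 + z.2 := by omega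
        have he2 : min z.1 z.2 + ((z.1:ℤ) - z.2).natAbs = z.1 := by omega
        rw [he1, he2, hmin]
        ring_nf
    · rw [if_neg h1, if_neg h1]
      exact gfun_nonneg L x ht _
  -- summability of gfun via product majorant
  have hG2 : Summable (fun c : ℕ => (t^2)^c / (c.factorial : ℝ)) :=
    Real.summable_pow_div_factorial (t^2)
  have hG1le : ∀ n : ℤ, (if n = 0 then (0:ℝ) else (3/4:ℝ)^(Dfun L x n)) ≤ (3/4:ℝ)^(n.natAbs) := by
    intro n
    split_ifs with h
    · positivity
    · apply pow_le_pow_of_le_one (by norm_num) (by norm_num)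
      have h2 := (hkey n h).2
      have h3 : n.natAbs * q ≤ Dfun L x n := by exact_mod_cast h2
      calc n.natAbs ≤ n.natAbs * q := Nat.le_mul_of_pos_right _ (by omega)
        _ ≤ Dfun L x n := h3
  have hG1 : Summable (fun n : ℤ => (if n = 0 then (0:ℝ) else (3/4:ℝ)^(Dfun L x n))) := by
    refine Summable.of_nonneg_of_le (fun n => ?_) hG1le
      (summable_int_geom (r := (3/4:ℝ)) (by norm_num) (by norm_num))
    split_ifs <;> positivity
  have hprod : Summable (fun p : ℤ × ℕ =>
      (if p.1 = 0 then (0:ℝ) else (3/4:ℝ)^(Dfun L x p.1)) * ((t^2)^p.2 / (p.2.factorial : ℝ))) := by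
    have h1 := summable_mul_of_summable_norm (summable_norm_iff.mpr hG1) (summable_norm_iff.mpr hG2)
    exact h1.congr (fun p => rfl)
  have hgle : ∀ p : ℤ × ℕ, gfun L x t p ≤
      (if p.1 = 0 then (0:ℝ) else (3/4:ℝ)^(Dfun L x p.1)) * ((t^2)^p.2 / (p.2.factorial : ℝ)) := by
    intro p
    rw [gfun]
    split_ifs with h
    · simp
    · exact g_le_aux t ht (Dfun L x p.1) p.2 (hwk p.1 h)
  have hsg : Summable (gfun L x t) :=
    Summable.of_nonneg_of_le (gfun_nonneg L x ht) hgle hprod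
  have hsf : Summable (fbd L x t) := summable_fbd L x ht
  -- inner sums
  have hinner : ∀ n : ℤ, ∑' c : ℕ, gfun L x t (n, c)
      ≤ (if n = 0 then (0:ℝ) else ((3/4:ℝ)^q)^(n.natAbs)) := by
    intro n
    by_cases h : n = 0
    · rw [if_pos h, h]
      have : ∀ c : ℕ, gfun L x t ((0:ℤ), c) = 0 := fun c => by rw [gfun]; simp
      rw [tsum_congr this, tsum_zero]
    · rw [if_neg h]
      have hval : ∀ c : ℕ, gfun L x t (n, c)
          = t ^ (2*c + Dfun L x n) /
            ((c.factorial : ℝ) * ((c + Dfun L x n).factorial : ℝ)) := fun c => by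
        rw [gfun, if_neg h]
      rw [tsum_congr hval]
      calc ∑' c : ℕ, t ^ (2*c + Dfun L x n) /
            ((c.factorial : ℝ) * ((c + Dfun L x n).factorial : ℝ))
          ≤ (3/4:ℝ)^(Dfun L x n) := inner_sum_le (Dfun L x n) (hD1 n h) t ht (hDt n h)
        _ ≤ ((3/4:ℝ)^q)^(n.natAbs) := by
            rw [← pow_mul]
            apply pow_le_pow_of_le_one (by norm_num) (by norm_num)
            have h2 := (hkey n h).2
            have h3 : n.natAbs * q ≤ Dfun L x n := by exact_mod_cast h2
            rw [Nat.mul_comm] at h3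
            exact h3
  have hsinner : Summable (fun n : ℤ => ∑' c : ℕ, gfun L x t (n, c)) :=
    ⟨∑' p, gfun L x t p, hsg.hasSum.prod_fiberwise (fun n => (hsg.prod_factor n).hasSum)⟩
  have hsM : Summable (fun n : ℤ => (if n = 0 then (0:ℝ) else ((3/4:ℝ)^q)^(n.natAbs))) := by
    apply Summable.of_nonneg_of_le (fun n => by split_ifs <;> positivity) (fun n => ?_)
      (summable_int_geom (r := (3/4:ℝ)^q) (by positivity)
        (pow_lt_one₀ (by norm_num) (by norm_num) (by omega)))
    split_ifs
    · positivity
    · exact le_refl _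
  have hrq : ((3/4:ℝ)^q) ≤ 3/4 := by
    calc ((3/4:ℝ)^q) ≤ (3/4:ℝ)^1 := pow_le_pow_of_le_one (by norm_num) (by norm_num) hq1
      _ = 3/4 := pow_one _
  calc ∑' z : ℕ × ℕ, fbd L x t z
      ≤ ∑' p : ℤ × ℕ, gfun L x t p :=
        Summable.tsum_le_tsum_of_inj (efun L x) heinj (fun p _ => gfun_nonneg L x ht p) hpt hsf hsg
    _ = ∑' n : ℤ, ∑' c : ℕ, gfun L x t (n, c) := Summable.tsum_prod' hsg hsg.prod_factor
    _ ≤ ∑' n : ℤ, (if n = 0 then (0:ℝ) else ((3/4:ℝ)^q)^(n.natAbs)) :=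
        Summable.tsum_le_tsum hinner hsinner hsM
    _ ≤ 8 * ((3/4:ℝ)^q) := tsum_M_le (by positivity) hrq
    _ = 8 * (3/4 : ℝ) ^ (L/2) := by rw [hq]

lemma norm_Q1_le (L : ℕ) (hL : 1 ≤ L) (x : ℤ) (R u : ℝ) : ‖Q1 L x R u‖ ≤ 1 := by
  rw [Q1, norm_mul]
  have hcard : ‖∑ m ∈ Lambda1 L,
      Complex.exp (2*Real.pi*Complex.I*(((m:ℝ)/(L:ℝ)*(x:ℝ) : ℝ):ℂ) +
        Complex.I*((R*Real.cos (2*Real.pi*((m:ℝ)/(L:ℝ)+u)) : ℝ):ℂ))‖ ≤ (L:ℝ) := by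
    calc _ ≤ ∑ m ∈ Lambda1 L, ‖Complex.exp (2*Real.pi*Complex.I*(((m:ℝ)/(L:ℝ)*(x:ℝ) : ℝ):ℂ) +
        Complex.I*((R*Real.cos (2*Real.pi*((m:ℝ)/(L:ℝ)+u)) : ℝ):ℂ))‖ := norm_sum_le _ _
      _ = ∑ m ∈ Lambda1 L, 1 := by
          apply Finset.sum_congr rfl
          intro m _
          exact norm_exp_pure_imag _ (re_arg_eq_zero _ _)
      _ = (L:ℝ) := by rw [Finset.sum_const, card_lambda1]; simp
  have hL' : (0:ℝ) < L := by exact_mod_cast hL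
  have : ‖((L:ℂ))⁻¹‖ = (L:ℝ)⁻¹ := by
    rw [norm_inv, Complex.norm_natCast]
  rw [this]
  calc (L:ℝ)⁻¹ * _ ≤ (L:ℝ)⁻¹ * (L:ℝ) := by
        apply mul_le_mul_of_nonneg_left hcard (by positivity)
    _ = 1 := by field_simp

lemma norm_I1_le (x : ℤ) (R u : ℝ) : ‖I1 x R u‖ ≤ 1 := by
  have h : ‖I1 x R u‖ ≤ 1 * |(1:ℝ)/2 - (-(1:ℝ)/2)| := by
    apply intervalIntegral.norm_integral_le_of_norm_le_const
    intro k _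
    exact le_of_eq (norm_exp_pure_imag _ (re_arg_eq_zero _ _))
  have h2 : (1:ℝ) * |(1:ℝ)/2 - (-(1:ℝ)/2)| = 1 := by norm_num
  rw [h2] at h
  exact h

lemma norm_one_exp (c : ℂ) (hc : c.re = 0) : ‖Complex.exp c‖ = 1 := norm_exp_pure_imag c hc

theorem Q1_I1_comparison :
    ∃ C : ℝ, 0 < C ∧ ∃ δ₀ : ℝ, 0 < δ₀ ∧
      ∀ (L : ℕ), 2 ≤ L → ∀ (R u : ℝ), ∀ x ∈ Lambda1 L,
        ‖Q1 L x R u - I1 x R u‖ ≤ C * Real.exp (-δ₀ * max ((L:ℝ) - 4*|R|) 0) := by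
  refine ⟨8, by norm_num, 1/16, by norm_num, ?_⟩
  intro L hL R u x hx
  by_cases hR : 4 * |R| ≤ (L:ℝ)
  · have h1 : ‖Q1 L x R u - I1 x R u‖ ≤ ∑' z : ℕ × ℕ, fbd L x (|R|/2) z :=
      normQI_le L (by omega) x R u
    have h2 : ∑' z : ℕ × ℕ, fbd L x (|R|/2) z ≤ 8 * (3/4 : ℝ) ^ (L/2) :=
      tail_bound L hL x (abs_le_of_mem_lambda1 hx) (|R|/2) (by positivity) (by linarith)
    have h3 : (3/4 : ℝ) ^ (L/2) ≤ Real.exp (-(1/16) * max ((L:ℝ) - 4*|R|) 0) := by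
      have hq4 : (L:ℝ) ≤ 4 * ((L/2 : ℕ) : ℝ) := by
        have h : L ≤ 4 * (L/2) := by omega
        exact_mod_cast h
      have hmaxle : max ((L:ℝ) - 4*|R|) 0 ≤ (L:ℝ) := by
        have hL0 : (0:ℝ) ≤ (L:ℝ) := by positivity
        exact max_le (by linarith [abs_nonneg R]) hL0
      have hbase : (3/4 : ℝ) ≤ Real.exp (-(1/4)) := by
        have h := Real.add_one_le_exp (-(1/4) : ℝ); linarith
      calc (3/4:ℝ)^(L/2) ≤ Real.exp (-(1/4))^(L/2) :=
            pow_le_pow_left₀ (by norm_num) hbase _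
        _ = Real.exp (((L/2 : ℕ) : ℝ) * (-(1/4))) := (Real.exp_nat_mul _ _).symm
        _ ≤ Real.exp (-(1/16) * max ((L:ℝ) - 4*|R|) 0) := by
            apply Real.exp_le_exp.mpr
            have hm0 : 0 ≤ max ((L:ℝ) - 4*|R|) 0 := le_max_right _ _
            linarith
    calc ‖Q1 L x R u - I1 x R u‖ ≤ 8 * (3/4 : ℝ) ^ (L/2) := le_trans h1 h2
      _ ≤ 8 * Real.exp (-(1/16) * max ((L:ℝ) - 4*|R|) 0) := by
          have := h3; nlinarith [Real.exp_pos (-(1/16) * max ((L:ℝ) - 4*|R|) 0)]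
      _ = 8 * Real.exp (-(1/16 : ℝ) * max ((L:ℝ) - 4*|R|) 0) := rfl
  · have hmax : max ((L:ℝ) - 4*|R|) 0 = 0 := by
      apply max_eq_right; linarith
    rw [hmax]
    simp only [mul_zero, Real.exp_zero, mul_one]
    calc ‖Q1 L x R u - I1 x R u‖ ≤ ‖Q1 L x R u‖ + ‖I1 x R u‖ := norm_sub_le _ _
      _ ≤ 1 + 1 := add_le_add (norm_Q1_le L (by omega) x R u) (norm_I1_le x R u)
      _ ≤ 8 := by norm_num

end KWP
end
end
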